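/- arXiv:1403.6375 — 2 statements merged into one kernel-verified Lean document; each statement's English description precedes it below -/
import Mathlib

section
/- The set {e_i x^j : 0 ≤ i ≤ 3, 0 ≤ j ≤ 4T+2} ∪ {e_i y^l : 0 ≤ i ≤ 3, 1 ≤ l ≤ 4T+1} is a K-basis of the algebra A_T; in particular, dim_K A_T = 16(2T+1). -/
open scoped TensorProduct

/-- Generators of the path algebra `KΓ`: trivial paths `e i` and arrows `a i`, `b i`. -/
inductive Gen : Type
  | e : Fin 4 → Gen
  | a : Fin 4 → Gen
  | b : Fin 4 → Gen

variable (K : Type) [Field K]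

/-- `x := a 0 + a 1 + a 2 + a 3` in the free algebra. -/
noncomputable def gx : FreeAlgebra K Gen := ∑ i : Fin 4, FreeAlgebra.ι K (Gen.a i)

/-- `y := b 0 + b 1 + b 2 + b 3` in the free algebra. -/
noncomputable def gy : FreeAlgebra K Gen := ∑ i : Fin 4, FreeAlgebra.ι K (Gen.b i)

/-- The relations defining `A_T` as a quotient of the free algebra: the path algebra
relations for the circular quiver `Γ` (orthogonal idempotents `e i` summing to `1`,
and the source/target relations for the arrows), together with the relations
`x * y = 0`, `y * x = 0` and `x ^ (4T+2) + y ^ (4T+2) = 0` generating `I_T`. -/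
inductive ATRel (T : ℕ) : FreeAlgebra K Gen → FreeAlgebra K Gen → Prop
  | ee (i j : Fin 4) : ATRel T (FreeAlgebra.ι K (Gen.e i) * FreeAlgebra.ι K (Gen.e j))
      (if i = j then FreeAlgebra.ι K (Gen.e i) else 0)
  | sum : ATRel T (∑ i : Fin 4, FreeAlgebra.ι K (Gen.e i)) 1
  | ea (i : Fin 4) : ATRel T (FreeAlgebra.ι K (Gen.e i) * FreeAlgebra.ι K (Gen.a i))
      (FreeAlgebra.ι K (Gen.a i))
  | ae (i : Fin 4) : ATRel T (FreeAlgebra.ι K (Gen.a i) * FreeAlgebra.ι K (Gen.e (i + 1)))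
      (FreeAlgebra.ι K (Gen.a i))
  | eb (i : Fin 4) : ATRel T (FreeAlgebra.ι K (Gen.e i) * FreeAlgebra.ι K (Gen.b i))
      (FreeAlgebra.ι K (Gen.b i))
  | be (i : Fin 4) : ATRel T (FreeAlgebra.ι K (Gen.b i) * FreeAlgebra.ι K (Gen.e (i + 1)))
      (FreeAlgebra.ι K (Gen.b i))
  | xy : ATRel T (gx K * gy K) 0
  | yx : ATRel T (gy K * gx K) 0
  | xy_pow : ATRel T (gx K ^ (4 * T + 2) + gy K ^ (4 * T + 2)) 0

/-- The self-injective special biserial algebra `A_T = KΓ/I_T`. -/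
def AT (T : ℕ) : Type := RingQuot (ATRel K T)

noncomputable instance (T : ℕ) : Ring (AT K T) :=
  inferInstanceAs (Ring (RingQuot (ATRel K T)))
noncomputable instance (T : ℕ) : Algebra K (AT K T) :=
  inferInstanceAs (Algebra K (RingQuot (ATRel K T)))

variable (T : ℕ)

/-- The image of the trivial path `e i` in `A_T`. -/
noncomputable def eA (i : Fin 4) : AT K T :=
  show RingQuot (ATRel K T) from RingQuot.mkAlgHom K (ATRel K T) (FreeAlgebra.ι K (Gen.e i))

/-- The element `x = a 0 + a 1 + a 2 + a 3` of `A_T`. -/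
noncomputable def xA : AT K T :=
  show RingQuot (ATRel K T) from RingQuot.mkAlgHom K (ATRel K T) (gx K)

/-- The element `y = b 0 + b 1 + b 2 + b 3` of `A_T`. -/
noncomputable def yA : AT K T :=
  show RingQuot (ATRel K T) from RingQuot.mkAlgHom K (ATRel K T) (gy K)

namespace ATProof

open Fin.NatCast Fin.CommRing

/-- Index set for the "big" model vector space: `(i, inl j)` stands for `e i * x^j`
(valid for `j ≤ 4T+2`) and `(i, inr l)` for `e i * y^l` (valid for `1 ≤ l ≤ 4T+1`). -/
abbrev VI : Type := Fin 4 × (ℕ ⊕ ℕ)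

variable (K : Type) [Field K] (T : ℕ)

abbrev V : Type := VI → K

/-- Left multiplication by `e i` on the model. -/
noncomputable def opE (i : Fin 4) : Module.End K (V K) where
  toFun f := fun p => if p.1 = i then f p else 0
  map_add' f g := by funext p; by_cases h : p.1 = i <;> simp [h]
  map_smul' c f := by funext p; by_cases h : p.1 = i <;> simp [h]

/-- Left multiplication by `a i` on the model. -/
noncomputable def opA (i : Fin 4) : Module.End K (V K) where
  toFun f := fun p => match p with
    | (k, Sum.inl j) => if k = i ∧ 1 ≤ j ∧ j ≤ 4*T+2 then f (i+1, Sum.inl (j-1)) else 0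
    | (_, Sum.inr _) => 0
  map_add' f g := by
    funext p; rcases p with ⟨k, j | l⟩ <;> simp only [Pi.add_apply]
    · split <;> simp
    · simp
  map_smul' c f := by
    funext p; rcases p with ⟨k, j | l⟩ <;> simp only [Pi.smul_apply, RingHom.id_apply]
    · split <;> simp
    · simp

/-- Left multiplication by `b i` on the model. -/
noncomputable def opB (i : Fin 4) : Module.End K (V K) where
  toFun f := fun p => match p with
    | (k, Sum.inl j) => if k = i ∧ j = 4*T+2 then -f (i+1, Sum.inr (4*T+1)) else 0
    | (k, Sum.inr l) => if k = i then
        (if l = 1 then f (i+1, Sum.inl 0) else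
         if 2 ≤ l ∧ l ≤ 4*T+1 then f (i+1, Sum.inr (l-1)) else 0) else 0
  map_add' f g := by
    funext p; rcases p with ⟨k, j | l⟩ <;> simp only [Pi.add_apply]
    · split <;> simp [neg_add, add_comm]
    · split
      · split
        · simp
        · split <;> simp
      · simp
  map_smul' c f := by
    funext p; rcases p with ⟨k, j | l⟩ <;> simp only [Pi.smul_apply, RingHom.id_apply]
    · split <;> simp
    · split
      · split
        · simp
        · split <;> simp
      · simp

noncomputable def opX : Module.End K (V K) := ∑ i : Fin 4, opA K T i
noncomputable def opY : Module.End K (V K) := ∑ i : Fin 4, opB K T i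

lemma opX_apply_inl (f : V K) (k : Fin 4) (j : ℕ) :
    opX K T f (k, Sum.inl j) = if 1 ≤ j ∧ j ≤ 4*T+2 then f (k+1, Sum.inl (j-1)) else 0 := by
  simp only [opX, LinearMap.sum_apply]
  rw [Finset.sum_apply]
  have : ∀ i : Fin 4, opA K T i f (k, Sum.inl j)
      = if k = i then (if 1 ≤ j ∧ j ≤ 4*T+2 then f (i+1, Sum.inl (j-1)) else 0) else 0 := by
    intro i
    show (if k = i ∧ 1 ≤ j ∧ j ≤ 4*T+2 then f (i+1, Sum.inl (j-1)) else 0) = _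
    by_cases h : k = i <;> simp [h]
  simp only [this]
  rw [Finset.sum_ite_eq (Finset.univ) k]
  simp

lemma opX_apply_inr (f : V K) (k : Fin 4) (l : ℕ) :
    opX K T f (k, Sum.inr l) = 0 := by
  simp only [opX, LinearMap.sum_apply]
  rw [Finset.sum_apply]
  refine Finset.sum_eq_zero fun i _ => rfl

lemma opY_apply_inl (f : V K) (k : Fin 4) (j : ℕ) :
    opY K T f (k, Sum.inl j) = if j = 4*T+2 then -f (k+1, Sum.inr (4*T+1)) else 0 := by
  simp only [opY, LinearMap.sum_apply]
  rw [Finset.sum_apply]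
  have : ∀ i : Fin 4, opB K T i f (k, Sum.inl j)
      = if k = i then (if j = 4*T+2 then -f (i+1, Sum.inr (4*T+1)) else 0) else 0 := by
    intro i
    show (if k = i ∧ j = 4*T+2 then -f (i+1, Sum.inr (4*T+1)) else 0) = _
    by_cases h : k = i <;> simp [h]
  simp only [this]
  rw [Finset.sum_ite_eq (Finset.univ) k]
  simp

lemma opY_apply_inr (f : V K) (k : Fin 4) (l : ℕ) :
    opY K T f (k, Sum.inr l) = (if l = 1 then f (k+1, Sum.inl 0) else
      if 2 ≤ l ∧ l ≤ 4*T+1 then f (k+1, Sum.inr (l-1)) else 0) := by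
  simp only [opY, LinearMap.sum_apply]
  rw [Finset.sum_apply]
  have : ∀ i : Fin 4, opB K T i f (k, Sum.inr l)
      = if k = i then (if l = 1 then f (i+1, Sum.inl 0) else
        if 2 ≤ l ∧ l ≤ 4*T+1 then f (i+1, Sum.inr (l-1)) else 0) else 0 := fun i => rfl
  simp only [this]
  rw [Finset.sum_ite_eq (Finset.univ) k]
  simp


lemma cast_succ_fin4 (m : ℕ) : (((m+1 : ℕ)) : Fin 4) = ((m : ℕ) : Fin 4) + 1 := by
  push_cast; ring

lemma opX_pow_inr (m : ℕ) (hm : 1 ≤ m) (f : V K) (k : Fin 4) (l : ℕ) :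
    ((opX K T)^m) f (k, Sum.inr l) = 0 := by
  induction m, hm using Nat.le_induction generalizing f with
  | base => rw [pow_one]; exact opX_apply_inr K T f k l
  | succ m hm ih =>
    rw [pow_succ, Module.End.mul_apply]
    exact ih (opX K T f)

lemma opX_pow_inl (m : ℕ) (hm : 1 ≤ m) (f : V K) (k : Fin 4) (j : ℕ) :
    ((opX K T)^m) f (k, Sum.inl j) =
      if m ≤ j ∧ j ≤ 4*T+2 then f (k + (m : Fin 4), Sum.inl (j - m)) else 0 := by
  induction m, hm using Nat.le_induction generalizing f k j with
  | base => rw [pow_one, opX_apply_inl]; norm_num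
  | succ m hm ih =>
    rw [pow_succ, Module.End.mul_apply, ih]
    rw [cast_succ_fin4]
    by_cases h : m + 1 ≤ j ∧ j ≤ 4*T+2
    · rw [if_pos ⟨by omega, h.2⟩, if_pos h, opX_apply_inl,
        if_pos ⟨by omega, by omega⟩]
      have h1 : j - m - 1 = j - (m+1) := by omega
      have h2 : k + (m : Fin 4) + 1 = k + ((m : Fin 4) + 1) := by ring
      rw [h1, h2]
    · rw [if_neg h]
      by_cases h' : m ≤ j ∧ j ≤ 4*T+2
      · rw [if_pos h', opX_apply_inl, if_neg (by omega)]
      · rw [if_neg h']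

lemma opY_pow (m : ℕ) (hm : 1 ≤ m) : m ≤ 4*T+1 →
    (∀ (f : V K) (k : Fin 4) (j : ℕ), ((opY K T)^m) f (k, Sum.inl j) =
      if j = 4*T+2 then -f (k + (m : Fin 4), Sum.inr (4*T+2-m)) else 0) ∧
    (∀ (f : V K) (k : Fin 4) (l : ℕ), ((opY K T)^m) f (k, Sum.inr l) =
      if l = m then f (k + (m : Fin 4), Sum.inl 0)
      else if m+1 ≤ l ∧ l ≤ 4*T+1 then f (k + (m : Fin 4), Sum.inr (l - m)) else 0) := by
  induction m, hm using Nat.le_induction with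
  | base =>
    intro _
    constructor
    · intro f k j
      rw [pow_one, opY_apply_inl]
      norm_num
    · intro f k l
      rw [pow_one, opY_apply_inr]
      norm_num
  | succ m hm ih =>
    intro hm2
    obtain ⟨ihl, ihr⟩ := ih (by omega)
    rw [cast_succ_fin4]
    constructor
    · intro f k j
      rw [pow_succ', Module.End.mul_apply, opY_apply_inl, ihr]
      by_cases h : j = 4*T+2
      · rw [if_pos h, if_pos h, if_neg (by omega), if_pos ⟨by omega, by omega⟩]
        have h1 : 4*T+1 - m = 4*T+2 - (m+1) := by omega
        have h2 : k + 1 + (m : Fin 4) = k + ((m : Fin 4) + 1) := by ring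
        rw [h1, h2]
      · rw [if_neg h, if_neg h]
    · intro f k l
      rw [pow_succ', Module.End.mul_apply, opY_apply_inr]
      have h2 : k + 1 + (m : Fin 4) = k + ((m : Fin 4) + 1) := by ring
      by_cases h1 : l = 1
      · rw [if_pos h1, ihl, if_neg (by omega), if_neg (by omega), if_neg (by omega)]
      · rw [if_neg h1]
        by_cases h3 : 2 ≤ l ∧ l ≤ 4*T+1
        · rw [if_pos h3, ihr, h2]
          have h6 : l - 1 - m = l - (m+1) := by omega
          rw [h6]
          split_ifs <;> first | rfl | omega
        · rw [if_neg h3, if_neg (by omega), if_neg (by omega)]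


noncomputable def genMap : Gen → Module.End K (V K)
  | Gen.e i => opE K i
  | Gen.a i => opA K T i
  | Gen.b i => opB K T i

noncomputable def liftF : FreeAlgebra K Gen →ₐ[K] Module.End K (V K) :=
  FreeAlgebra.lift K (genMap K T)

@[simp] lemma liftF_e (i : Fin 4) : liftF K T (FreeAlgebra.ι K (Gen.e i)) = opE K i := by
  simp [liftF, genMap]
@[simp] lemma liftF_a (i : Fin 4) : liftF K T (FreeAlgebra.ι K (Gen.a i)) = opA K T i := by
  simp [liftF, genMap]
@[simp] lemma liftF_b (i : Fin 4) : liftF K T (FreeAlgebra.ι K (Gen.b i)) = opB K T i := by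
  simp [liftF, genMap]

lemma liftF_gx : liftF K T (gx K) = opX K T := by
  simp [gx, map_sum, opX]
lemma liftF_gy : liftF K T (gy K) = opY K T := by
  simp [gy, map_sum, opY]

lemma opE_apply (i : Fin 4) (f : V K) (p : VI) :
    opE K i f p = if p.1 = i then f p else 0 := rfl
lemma opA_apply_inl (i : Fin 4) (f : V K) (k : Fin 4) (j : ℕ) :
    opA K T i f (k, Sum.inl j)
      = if k = i ∧ 1 ≤ j ∧ j ≤ 4*T+2 then f (i+1, Sum.inl (j-1)) else 0 := rfl
lemma opA_apply_inr (i : Fin 4) (f : V K) (k : Fin 4) (l : ℕ) :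
    opA K T i f (k, Sum.inr l) = 0 := rfl
lemma opB_apply_inl (i : Fin 4) (f : V K) (k : Fin 4) (j : ℕ) :
    opB K T i f (k, Sum.inl j)
      = if k = i ∧ j = 4*T+2 then -f (i+1, Sum.inr (4*T+1)) else 0 := rfl
lemma opB_apply_inr (i : Fin 4) (f : V K) (k : Fin 4) (l : ℕ) :
    opB K T i f (k, Sum.inr l) = if k = i then
        (if l = 1 then f (i+1, Sum.inl 0) else
         if 2 ≤ l ∧ l ≤ 4*T+1 then f (i+1, Sum.inr (l-1)) else 0) else 0 := rfl

theorem liftF_rel : ∀ ⦃r r' : FreeAlgebra K Gen⦄, ATRel K T r r' → liftF K T r = liftF K T r' := by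
  intro r r' h
  induction h with
  | ee i j =>
    by_cases hij : i = j
    · subst hij
      rw [if_pos rfl]
      simp only [map_mul, liftF_e]
      refine LinearMap.ext fun f => funext fun p => ?_
      simp only [Module.End.mul_apply, opE_apply]
      by_cases h : p.1 = i <;> simp [h]
    · rw [if_neg hij]
      simp only [map_mul, liftF_e, map_zero]
      refine LinearMap.ext fun f => funext fun p => ?_
      simp only [Module.End.mul_apply, opE_apply, LinearMap.zero_apply, Pi.zero_apply]
      by_cases h : p.1 = i <;> by_cases h' : p.1 = j <;> simp [h, h'] <;>
        · intro h2; exact absurd h2 (by omega)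
  | sum =>
    rw [map_sum, map_one]
    refine LinearMap.ext fun f => funext fun p => ?_
    rw [LinearMap.sum_apply, Finset.sum_apply]
    simp only [liftF_e, opE_apply]
    rw [Finset.sum_ite_eq Finset.univ p.1 (fun _ => f p)]
    simp [Module.End.one_apply]
  | ea i =>
    simp only [map_mul, liftF_e, liftF_a]
    refine LinearMap.ext fun f => funext fun p => ?_
    rcases p with ⟨k, j | l⟩ <;>
      simp only [Module.End.mul_apply, opE_apply, opA_apply_inl, opA_apply_inr] <;>
      by_cases h : k = i <;> simp [h]
  | ae i =>
    simp only [map_mul, liftF_e, liftF_a]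
    refine LinearMap.ext fun f => funext fun p => ?_
    rcases p with ⟨k, j | l⟩ <;>
      simp only [Module.End.mul_apply, opE_apply, opA_apply_inl, opA_apply_inr] <;>
      split_ifs <;> simp
  | eb i =>
    simp only [map_mul, liftF_e, liftF_b]
    refine LinearMap.ext fun f => funext fun p => ?_
    rcases p with ⟨k, j | l⟩ <;>
      simp only [Module.End.mul_apply, opE_apply, opB_apply_inl, opB_apply_inr] <;>
      by_cases h : k = i <;> simp [h]
  | be i =>
    simp only [map_mul, liftF_e, liftF_b]
    refine LinearMap.ext fun f => funext fun p => ?_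
    rcases p with ⟨k, j | l⟩ <;>
      simp only [Module.End.mul_apply, opE_apply, opB_apply_inl, opB_apply_inr] <;>
      split_ifs <;> simp
  | xy =>
    simp only [map_mul, liftF_gx, liftF_gy, map_zero]
    refine LinearMap.ext fun f => funext fun p => ?_
    rcases p with ⟨k, j | l⟩ <;>
      simp only [Module.End.mul_apply, opX_apply_inl, opX_apply_inr, opY_apply_inl,
        LinearMap.zero_apply, Pi.zero_apply] <;>
      split_ifs <;> first | rfl | omega
  | yx =>
    simp only [map_mul, liftF_gx, liftF_gy, map_zero]
    refine LinearMap.ext fun f => funext fun p => ?_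
    rcases p with ⟨k, j | l⟩ <;>
      simp only [Module.End.mul_apply, opY_apply_inl, opY_apply_inr, opX_apply_inl,
        opX_apply_inr, LinearMap.zero_apply, Pi.zero_apply] <;>
      split_ifs <;> first | rfl | omega | simp
  | xy_pow =>
    rw [map_add, map_pow, map_pow, liftF_gx, liftF_gy, map_zero]
    obtain ⟨ihl, ihr⟩ := opY_pow K T (4*T+1) (by omega) (le_refl _)
    refine LinearMap.ext fun f => funext fun p => ?_
    rw [LinearMap.add_apply, Pi.add_apply, LinearMap.zero_apply, Pi.zero_apply]
    have hsucc : 4*T+2 = (4*T+1)+1 := rfl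
    rcases p with ⟨k, j | l⟩
    · rw [opX_pow_inl K T _ (by omega), hsucc, pow_succ', Module.End.mul_apply,
        opY_apply_inl, ihr]
      by_cases h : j = 4*T+2
      · rw [if_pos ⟨by omega, by omega⟩, if_pos h, if_pos rfl]
        have h1 : j - (4*T+2) = 0 := by omega
        have h2 : k + ((4*T+2 : ℕ) : Fin 4) = k + 1 + ((4*T+1 : ℕ) : Fin 4) := by
          push_cast; ring
        rw [h1, h2, add_neg_cancel]
      · rw [if_neg (by omega), if_neg h, add_zero]
    · rw [opX_pow_inr K T _ (by omega), hsucc, pow_succ', Module.End.mul_apply,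
        opY_apply_inr, zero_add]
      by_cases h1 : l = 1
      · rw [if_pos h1, ihl, if_neg (by omega)]
      · rw [if_neg h1]
        by_cases h3 : 2 ≤ l ∧ l ≤ 4*T+1
        · rw [if_pos h3, ihr, if_neg (by omega), if_neg (by omega)]
        · rw [if_neg h3]


noncomputable def psi : AT K T →ₐ[K] Module.End K (V K) :=
  RingQuot.liftAlgHom K ⟨liftF K T, liftF_rel K T⟩

lemma psi_mk (f : FreeAlgebra K Gen) :
    psi K T (show AT K T from RingQuot.mkAlgHom K (ATRel K T) f) = liftF K T f :=
  RingQuot.liftAlgHom_mkAlgHom_apply K _ _ f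

lemma psi_e (i : Fin 4) : psi K T (eA K T i) = opE K i :=
  (psi_mk K T _).trans (liftF_e K T i)

lemma psi_x : psi K T (xA K T) = opX K T :=
  (psi_mk K T _).trans (liftF_gx K T)

lemma psi_y : psi K T (yA K T) = opY K T :=
  (psi_mk K T _).trans (liftF_gy K T)

/-- The canonical cyclic vector `∑ i, δ_(i, x^0)`. -/
noncomputable def vone : V K := fun p => if p.2 = Sum.inl 0 then 1 else 0

/-- delta function at a point of `VI`. -/
noncomputable def delta (q : VI) : V K := fun p => if p = q then 1 else 0

/-- The index set of the candidate basis. -/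
abbrev BI : Type := Fin 4 × (Fin (4*T+3) ⊕ Fin (4*T+1))

/-- The candidate basis family. -/
noncomputable def fam : BI T → AT K T
  | (i, Sum.inl j) => eA K T i * xA K T ^ (j : ℕ)
  | (i, Sum.inr l) => eA K T i * yA K T ^ ((l : ℕ) + 1)

/-- Where each candidate basis element sends the cyclic vector. -/
def famTgt : BI T → VI
  | (i, Sum.inl j) => (i, Sum.inl (j : ℕ))
  | (i, Sum.inr l) => (i, Sum.inr ((l : ℕ) + 1))

lemma famTgt_injective : Function.Injective (famTgt T) := by
  rintro ⟨i, j | l⟩ ⟨i', j' | l'⟩ h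
  · simp only [famTgt, Prod.mk.injEq, Sum.inl.injEq] at h
    exact Prod.ext h.1 (congrArg Sum.inl (Fin.ext h.2))
  · exact absurd (congrArg Prod.snd h) (by simp [famTgt])
  · exact absurd (congrArg Prod.snd h) (by simp [famTgt])
  · simp only [famTgt, Prod.mk.injEq, Sum.inr.injEq] at h
    exact Prod.ext h.1 (congrArg Sum.inr (Fin.ext (by omega)))

lemma psi_fam (s : BI T) : psi K T (fam K T s) (vone K) = delta K (famTgt T s) := by
  rcases s with ⟨i, j | l⟩
  · show psi K T (eA K T i * xA K T ^ (j:ℕ)) (vone K) = _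
    rw [map_mul, map_pow, psi_e, psi_x, Module.End.mul_apply]
    have hx : (opX K T ^ (j:ℕ)) (vone K) = fun p : VI => if p.2 = Sum.inl (j:ℕ) then (1:K) else 0 := by
      rcases Nat.eq_zero_or_pos (j : ℕ) with h0 | h0
      · rw [h0, pow_zero]
        rfl
      · funext p
        rcases p with ⟨k, j' | l'⟩
        · rw [opX_pow_inl K T _ h0]
          have hj : (j:ℕ) ≤ 4*T+2 := by omega
          by_cases h : j' = (j:ℕ)
          · rw [if_pos ⟨by omega, by omega⟩]
            have : j' - (j:ℕ) = 0 := by omega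
            rw [this]
            simp [vone, h]
          · by_cases h2 : (j:ℕ) ≤ j' ∧ j' ≤ 4*T+2
            · rw [if_pos h2]
              simp only [vone, Sum.inl.injEq]
              rw [if_neg (by omega), if_neg (by simpa using h)]
            · rw [if_neg h2, if_neg (by simpa using h)]
        · rw [opX_pow_inr K T _ h0]
          simp
    rw [hx]
    funext p
    rcases p with ⟨k, s⟩
    show (if k = i then (if s = Sum.inl (j:ℕ) then (1:K) else 0) else 0) = _
    simp only [delta, famTgt, Prod.mk.injEq]
    by_cases h1 : k = i <;> by_cases h2 : s = Sum.inl (j:ℕ) <;> simp [h1, h2]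
  · show psi K T (eA K T i * yA K T ^ ((l:ℕ)+1)) (vone K) = _
    rw [map_mul, map_pow, psi_e, psi_y, Module.End.mul_apply]
    obtain ⟨ihl, ihr⟩ := opY_pow K T ((l:ℕ)+1) (by omega) (by omega)
    have hy : (opY K T ^ ((l:ℕ)+1)) (vone K)
        = fun p : VI => if p.2 = Sum.inr ((l:ℕ)+1) then (1:K) else 0 := by
      funext p
      rcases p with ⟨k, j' | l'⟩
      · rw [ihl]
        rw [show vone K (k + ((((l:ℕ)+1) : ℕ) : Fin 4), Sum.inr (4*T+2-((l:ℕ)+1))) = 0 from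
          by simp [vone]]
        simp
      · rw [ihr]
        simp only [vone, Sum.inl.injEq, Sum.inr.injEq]
        by_cases h : l' = (l:ℕ)+1
        · rw [if_pos h, if_pos h]
          simp [vone]
        · rw [if_neg (by omega)]
          split_ifs <;> simp_all
    rw [hy]
    funext p
    rcases p with ⟨k, s⟩
    show (if k = i then (if s = Sum.inr ((l:ℕ)+1) then (1:K) else 0) else 0) = _
    simp only [delta, famTgt, Prod.mk.injEq]
    by_cases h1 : k = i <;> by_cases h2 : s = Sum.inr ((l:ℕ)+1) <;> simp [h1, h2]

lemma fam_li : LinearIndependent K (fam K T) := by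
  rw [Fintype.linearIndependent_iff]
  intro c hc s
  have h1 := congrFun (congrArg (fun z => psi K T z (vone K)) hc) (famTgt T s)
  simp only [map_sum, map_smul, map_zero, LinearMap.sum_apply, LinearMap.smul_apply,
    Finset.sum_apply, Pi.smul_apply, LinearMap.zero_apply, Pi.zero_apply, psi_fam,
    smul_eq_mul] at h1
  have h2 : ∀ t : BI T, c t * delta K (famTgt T t) (famTgt T s)
      = if t = s then c t else 0 := by
    intro t
    by_cases h : t = s
    · subst h; simp [delta]
    · rw [if_neg h]
      have : famTgt T t ≠ famTgt T s := fun hh => h (famTgt_injective T hh)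
      simp [delta, Ne.symm this]
  rw [Finset.sum_congr rfl (fun t _ => h2 t), Finset.sum_ite_eq' Finset.univ s c] at h1
  simpa using h1


/-! ### Relations inside `A_T` -/

noncomputable def aA (i : Fin 4) : AT K T :=
  show RingQuot (ATRel K T) from RingQuot.mkAlgHom K (ATRel K T) (FreeAlgebra.ι K (Gen.a i))
noncomputable def bA (i : Fin 4) : AT K T :=
  show RingQuot (ATRel K T) from RingQuot.mkAlgHom K (ATRel K T) (FreeAlgebra.ι K (Gen.b i))

lemma eA_def (i : Fin 4) :
    eA K T i = RingQuot.mkAlgHom K (ATRel K T) (FreeAlgebra.ι K (Gen.e i)) := rfl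
lemma aA_def (i : Fin 4) :
    aA K T i = RingQuot.mkAlgHom K (ATRel K T) (FreeAlgebra.ι K (Gen.a i)) := rfl
lemma bA_def (i : Fin 4) :
    bA K T i = RingQuot.mkAlgHom K (ATRel K T) (FreeAlgebra.ι K (Gen.b i)) := rfl
lemma xA_def : xA K T = RingQuot.mkAlgHom K (ATRel K T) (gx K) := rfl
lemma yA_def : yA K T = RingQuot.mkAlgHom K (ATRel K T) (gy K) := rfl

lemma e_mul_e (i j : Fin 4) :
    eA K T i * eA K T j = if i = j then eA K T i else 0 := by
  have h := (map_mul (RingQuot.mkAlgHom K (ATRel K T)) (FreeAlgebra.ι K (Gen.e i))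
    (FreeAlgebra.ι K (Gen.e j))).symm.trans (RingQuot.mkAlgHom_rel K (ATRel.ee i j))
  refine h.trans ?_
  split_ifs with hh
  · rfl
  · exact map_zero _

lemma one_eq_sum_e : (1 : AT K T) = ∑ i, eA K T i := by
  have h := RingQuot.mkAlgHom_rel K (ATRel.sum (K := K) (T := T))
  rw [map_sum, map_one] at h
  exact h.symm

lemma ea' (i : Fin 4) : eA K T i * aA K T i = aA K T i :=
  (map_mul (RingQuot.mkAlgHom K (ATRel K T)) (FreeAlgebra.ι K (Gen.e i))
    (FreeAlgebra.ι K (Gen.a i))).symm.trans (RingQuot.mkAlgHom_rel K (ATRel.ea i))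
lemma ae' (i : Fin 4) : aA K T i * eA K T (i+1) = aA K T i :=
  (map_mul (RingQuot.mkAlgHom K (ATRel K T)) (FreeAlgebra.ι K (Gen.a i))
    (FreeAlgebra.ι K (Gen.e (i+1)))).symm.trans (RingQuot.mkAlgHom_rel K (ATRel.ae i))
lemma eb' (i : Fin 4) : eA K T i * bA K T i = bA K T i :=
  (map_mul (RingQuot.mkAlgHom K (ATRel K T)) (FreeAlgebra.ι K (Gen.e i))
    (FreeAlgebra.ι K (Gen.b i))).symm.trans (RingQuot.mkAlgHom_rel K (ATRel.eb i))
lemma be' (i : Fin 4) : bA K T i * eA K T (i+1) = bA K T i :=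
  (map_mul (RingQuot.mkAlgHom K (ATRel K T)) (FreeAlgebra.ι K (Gen.b i))
    (FreeAlgebra.ι K (Gen.e (i+1)))).symm.trans (RingQuot.mkAlgHom_rel K (ATRel.be i))

lemma e_mul_a (i j : Fin 4) : eA K T i * aA K T j = if i = j then aA K T j else 0 := by
  by_cases h : i = j
  · subst h; rw [if_pos rfl]; exact ea' K T i
  · rw [if_neg h, ← ea' K T j, ← mul_assoc, e_mul_e, if_neg h, zero_mul]

lemma e_mul_b (i j : Fin 4) : eA K T i * bA K T j = if i = j then bA K T j else 0 := by
  by_cases h : i = j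
  · subst h; rw [if_pos rfl]; exact eb' K T i
  · rw [if_neg h, ← eb' K T j, ← mul_assoc, e_mul_e, if_neg h, zero_mul]

lemma a_mul_e (i j : Fin 4) : aA K T i * eA K T j = if i = j - 1 then aA K T i else 0 := by
  by_cases h : i = j - 1
  · rw [if_pos h]
    have hj : j = i + 1 := by rw [h]; ring
    rw [hj]; exact ae' K T i
  · rw [if_neg h]
    conv_lhs => rw [← ae' K T i]
    rw [mul_assoc, e_mul_e, if_neg (fun hh => h (by rw [← hh]; ring)), mul_zero]

lemma b_mul_e (i j : Fin 4) : bA K T i * eA K T j = if i = j - 1 then bA K T i else 0 := by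
  by_cases h : i = j - 1
  · rw [if_pos h]
    have hj : j = i + 1 := by rw [h]; ring
    rw [hj]; exact be' K T i
  · rw [if_neg h]
    conv_lhs => rw [← be' K T i]
    rw [mul_assoc, e_mul_e, if_neg (fun hh => h (by rw [← hh]; ring)), mul_zero]

lemma xA_eq : xA K T = ∑ i, aA K T i := by
  rw [xA_def, show gx K = ∑ i : Fin 4, FreeAlgebra.ι K (Gen.a i) from rfl, map_sum]; rfl
lemma yA_eq : yA K T = ∑ i, bA K T i := by
  rw [yA_def, show gy K = ∑ i : Fin 4, FreeAlgebra.ι K (Gen.b i) from rfl, map_sum]; rfl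

lemma e_mul_x (i : Fin 4) : eA K T i * xA K T = aA K T i := by
  rw [xA_eq, Finset.mul_sum, Finset.sum_congr rfl (fun j _ => e_mul_a K T i j),
    Finset.sum_ite_eq Finset.univ i (fun j => aA K T j)]
  simp
lemma e_mul_y (i : Fin 4) : eA K T i * yA K T = bA K T i := by
  rw [yA_eq, Finset.mul_sum, Finset.sum_congr rfl (fun j _ => e_mul_b K T i j),
    Finset.sum_ite_eq Finset.univ i (fun j => bA K T j)]
  simp
lemma x_mul_e (k : Fin 4) : xA K T * eA K T k = aA K T (k - 1) := by
  rw [xA_eq, Finset.sum_mul, Finset.sum_congr rfl (fun i _ => a_mul_e K T i k),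
    Finset.sum_ite_eq' Finset.univ (k - 1) (fun i => aA K T i)]
  simp
lemma y_mul_e (k : Fin 4) : yA K T * eA K T k = bA K T (k - 1) := by
  rw [yA_eq, Finset.sum_mul, Finset.sum_congr rfl (fun i _ => b_mul_e K T i k),
    Finset.sum_ite_eq' Finset.univ (k - 1) (fun i => bA K T i)]
  simp

lemma x_mul_e' (k : Fin 4) : xA K T * eA K T k = eA K T (k-1) * xA K T := by
  rw [x_mul_e, e_mul_x]
lemma y_mul_e' (k : Fin 4) : yA K T * eA K T k = eA K T (k-1) * yA K T := by
  rw [y_mul_e, e_mul_y]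

lemma xpow_mul_e (j : ℕ) (k : Fin 4) :
    xA K T ^ j * eA K T k = eA K T (k - (j : Fin 4)) * xA K T ^ j := by
  induction j generalizing k with
  | zero => simp
  | succ n ih =>
    rw [pow_succ, mul_assoc, x_mul_e', ← mul_assoc, ih (k-1), mul_assoc, ← pow_succ]
    have : k - 1 - ((n : ℕ) : Fin 4) = k - (((n+1 : ℕ)) : Fin 4) := by push_cast; ring
    rw [this]

lemma ypow_mul_e (j : ℕ) (k : Fin 4) :
    yA K T ^ j * eA K T k = eA K T (k - (j : Fin 4)) * yA K T ^ j := by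
  induction j generalizing k with
  | zero => simp
  | succ n ih =>
    rw [pow_succ, mul_assoc, y_mul_e', ← mul_assoc, ih (k-1), mul_assoc, ← pow_succ]
    have : k - 1 - ((n : ℕ) : Fin 4) = k - (((n+1 : ℕ)) : Fin 4) := by push_cast; ring
    rw [this]

lemma x_mul_y : xA K T * yA K T = 0 :=
  ((map_mul (RingQuot.mkAlgHom K (ATRel K T)) (gx K) (gy K)).symm.trans
    (RingQuot.mkAlgHom_rel K (ATRel.xy (K := K) (T := T)))).trans (map_zero _)
lemma y_mul_x : yA K T * xA K T = 0 :=
  ((map_mul (RingQuot.mkAlgHom K (ATRel K T)) (gy K) (gx K)).symm.trans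
    (RingQuot.mkAlgHom_rel K (ATRel.yx (K := K) (T := T)))).trans (map_zero _)
lemma xy_pow_zero : xA K T ^ (4*T+2) + yA K T ^ (4*T+2) = 0 := by
  have h := RingQuot.mkAlgHom_rel K (ATRel.xy_pow (K := K) (T := T))
  rw [map_add, map_pow, map_pow, map_zero] at h
  exact h

lemma ypow_N : yA K T ^ (4*T+2) = -(xA K T ^ (4*T+2)) := by
  have h := xy_pow_zero K T
  rw [add_comm] at h
  exact eq_neg_of_add_eq_zero_left h
lemma xpow_N : xA K T ^ (4*T+2) = -(yA K T ^ (4*T+2)) :=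
  eq_neg_of_add_eq_zero_left (xy_pow_zero K T)

lemma xpow_mul_ypow (j m : ℕ) (hj : 1 ≤ j) (hm : 1 ≤ m) :
    xA K T ^ j * yA K T ^ m = 0 := by
  have h1 : j = (j-1)+1 := by omega
  have h2 : m = 1+(m-1) := by omega
  rw [h1, h2, pow_succ, pow_add, pow_one, mul_assoc, ← mul_assoc (xA K T), x_mul_y,
    zero_mul, mul_zero]
lemma ypow_mul_xpow (j m : ℕ) (hj : 1 ≤ j) (hm : 1 ≤ m) :
    yA K T ^ j * xA K T ^ m = 0 := by
  have h1 : j = (j-1)+1 := by omega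
  have h2 : m = 1+(m-1) := by omega
  rw [h1, h2, pow_succ, pow_add, pow_one, mul_assoc, ← mul_assoc (yA K T), y_mul_x,
    zero_mul, mul_zero]

lemma xpow_succN : xA K T ^ (4*T+3) = 0 := by
  rw [show (4*T+3) = 1 + (4*T+2) from by omega, pow_add, xpow_N, mul_neg,
    xpow_mul_ypow K T 1 (4*T+2) (le_refl 1) (by omega), neg_zero]
lemma ypow_succN : yA K T ^ (4*T+3) = 0 := by
  rw [show (4*T+3) = 1 + (4*T+2) from by omega, pow_add, ypow_N, mul_neg,
    ypow_mul_xpow K T 1 (4*T+2) (le_refl 1) (by omega), neg_zero]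

lemma xpow_big (m : ℕ) (h : 4*T+2 < m) : xA K T ^ m = 0 := by
  have : m = (4*T+3) + (m - (4*T+3)) := by omega
  rw [this, pow_add, xpow_succN, zero_mul]
lemma ypow_big (m : ℕ) (h : 4*T+2 < m) : yA K T ^ m = 0 := by
  have : m = (4*T+3) + (m - (4*T+3)) := by omega
  rw [this, pow_add, ypow_succN, zero_mul]


/-! ### Spanning -/

noncomputable def S : Submodule K (AT K T) := Submodule.span K (Set.range (fam K T))

lemma u_mem (i : Fin 4) (m : ℕ) : eA K T i * xA K T ^ m ∈ S K T := by
  rcases le_or_gt m (4*T+2) with h | h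
  · exact Submodule.subset_span ⟨(i, Sum.inl ⟨m, by omega⟩), rfl⟩
  · rw [xpow_big K T m h, mul_zero]; exact zero_mem _

lemma w_mem (i : Fin 4) (m : ℕ) (hm : 1 ≤ m) : eA K T i * yA K T ^ m ∈ S K T := by
  rcases lt_trichotomy m (4*T+2) with h | h | h
  · have : fam K T (i, Sum.inr ⟨m-1, by omega⟩) = eA K T i * yA K T ^ m := by
      show eA K T i * yA K T ^ ((m-1)+1) = _
      rw [show m - 1 + 1 = m from by omega]
    exact this ▸ Submodule.subset_span ⟨(i, Sum.inr ⟨m-1, by omega⟩), rfl⟩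
  · rw [h, ypow_N, mul_neg]
    exact neg_mem (u_mem K T i (4*T+2))
  · rw [ypow_big K T m h, mul_zero]; exact zero_mem _

lemma prod_mem (s t : BI T) : fam K T s * fam K T t ∈ S K T := by
  rcases s with ⟨i, j | l⟩ <;> rcases t with ⟨k, j' | l'⟩
  · show (eA K T i * xA K T ^ (j:ℕ)) * (eA K T k * xA K T ^ (j':ℕ)) ∈ S K T
    rw [mul_assoc, ← mul_assoc (xA K T ^ (j:ℕ)), xpow_mul_e, mul_assoc, ← pow_add,
      ← mul_assoc, e_mul_e]
    split_ifs with h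
    · exact u_mem K T i _
    · rw [zero_mul]; exact zero_mem _
  · show (eA K T i * xA K T ^ (j:ℕ)) * (eA K T k * yA K T ^ ((l':ℕ)+1)) ∈ S K T
    by_cases hj : (j:ℕ) = 0
    · rw [hj, pow_zero, mul_one, ← mul_assoc, e_mul_e]
      split_ifs with h
      · exact w_mem K T i _ (by omega)
      · rw [zero_mul]; exact zero_mem _
    · rw [mul_assoc, ← mul_assoc (xA K T ^ (j:ℕ)), xpow_mul_e, mul_assoc,
        xpow_mul_ypow K T _ _ (by omega) (by omega), mul_zero, mul_zero]
      exact zero_mem _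
  · show (eA K T i * yA K T ^ ((l:ℕ)+1)) * (eA K T k * xA K T ^ (j':ℕ)) ∈ S K T
    by_cases hj : (j':ℕ) = 0
    · rw [hj, pow_zero, mul_one, mul_assoc, ypow_mul_e, ← mul_assoc, e_mul_e]
      split_ifs with h
      · exact w_mem K T i _ (by omega)
      · rw [zero_mul]; exact zero_mem _
    · rw [mul_assoc, ← mul_assoc (yA K T ^ ((l:ℕ)+1)), ypow_mul_e, mul_assoc,
        ypow_mul_xpow K T _ _ (by omega) (by omega), mul_zero, mul_zero]
      exact zero_mem _
  · show (eA K T i * yA K T ^ ((l:ℕ)+1)) * (eA K T k * yA K T ^ ((l':ℕ)+1)) ∈ S K T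
    rw [mul_assoc, ← mul_assoc (yA K T ^ ((l:ℕ)+1)), ypow_mul_e, mul_assoc, ← pow_add,
      ← mul_assoc, e_mul_e]
    split_ifs with h
    · exact w_mem K T i _ (by omega)
    · rw [zero_mul]; exact zero_mem _

lemma one_mem_S : (1 : AT K T) ∈ S K T := by
  rw [one_eq_sum_e]
  refine Submodule.sum_mem _ (fun i _ => ?_)
  have := u_mem K T i 0
  rwa [pow_zero, mul_one] at this

lemma mul_mem_S {z w : AT K T} (hz : z ∈ S K T) (hw : w ∈ S K T) : z * w ∈ S K T := by
  have hSS : S K T * S K T ≤ S K T := by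
    rw [S, Submodule.span_mul_span]
    refine Submodule.span_le.2 ?_
    rintro _ ⟨v, hv, v', hv', rfl⟩
    obtain ⟨s, rfl⟩ := hv
    obtain ⟨t, rfl⟩ := hv'
    exact prod_mem K T s t
  exact hSS (Submodule.mul_mem_mul hz hw)

lemma span_top : ⊤ ≤ Submodule.span K (Set.range (fam K T)) := by
  intro z _
  obtain ⟨f, rfl⟩ := RingQuot.mkAlgHom_surjective K (ATRel K T) z
  show RingQuot.mkAlgHom K (ATRel K T) f ∈ S K T
  induction f using FreeAlgebra.induction with
  | grade0 r =>
    rw [AlgHom.commutes]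
    have : (algebraMap K (RingQuot (ATRel K T))) r = r • (1 : AT K T) :=
      Algebra.algebraMap_eq_smul_one r
    rw [this]
    exact Submodule.smul_mem _ _ (one_mem_S K T)
  | grade1 g =>
    cases g with
    | e i =>
      have := u_mem K T i 0
      rwa [pow_zero, mul_one] at this
    | a i =>
      have := u_mem K T i 1
      rw [pow_one, e_mul_x] at this
      exact this
    | b i =>
      have := w_mem K T i 1 (le_refl 1)
      rw [pow_one, e_mul_y] at this
      exact this
  | mul p q hp hq =>
    rw [map_mul]
    exact mul_mem_S K T (hp Submodule.mem_top) (hq Submodule.mem_top)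
  | add p q hp hq =>
    rw [map_add]
    exact add_mem (hp Submodule.mem_top) (hq Submodule.mem_top)


end ATProof

theorem basis_and_dim_AT (K : Type) [Field K] [IsAlgClosed K] (T : ℕ) :
    (∃ B : Module.Basis (Fin 4 × (Fin (4 * T + 3) ⊕ Fin (4 * T + 1))) K (AT K T),
      (∀ (i : Fin 4) (j : Fin (4 * T + 3)), B (i, Sum.inl j) = eA K T i * xA K T ^ (j : ℕ)) ∧
      (∀ (i : Fin 4) (l : Fin (4 * T + 1)), B (i, Sum.inr l) = eA K T i * yA K T ^ ((l : ℕ) + 1))) ∧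
    Module.finrank K (AT K T) = 16 * (2 * T + 1) := by
  classical
  refine ⟨⟨Module.Basis.mk (ATProof.fam_li K T) (ATProof.span_top K T), ?_, ?_⟩, ?_⟩
  · intro i j
    rw [Module.Basis.mk_apply]
    rfl
  · intro i l
    rw [Module.Basis.mk_apply]
    rfl
  · rw [Module.finrank_eq_card_basis (Module.Basis.mk (ATProof.fam_li K T) (ATProof.span_top K T))]
    simp only [Fintype.card_prod, Fintype.card_sum, Fintype.card_fin]
    omega
end

section
/- For all 0 ≤ i, j ≤ 3, the dimension of the Peirce subspace e_i A_T e_j over K equals 2T+1 if j − i ≡ 0 (mod 4), 2T+2 if j − i ≡ 1 (mod 4), 2T+1 if j − i ≡ 2 (mod 4), and 2T if j − i ≡ 3 (mod 4). -/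
open scoped TensorProduct
open scoped Fin.NatCast



namespace ATModel

variable {K : Type} [Field K] {T : ℕ}

/-- basis "path shapes": x^k (k ≤ 4T+1), y^(k+1) (k ≤ 4T), socle = x^(4T+2). -/
abbrev Q (T : ℕ) : Type := Fin (4*T+2) ⊕ Fin (4*T+1) ⊕ Unit

abbrev qX (k : Fin (4*T+2)) : Q T := Sum.inl k
abbrev qY (k : Fin (4*T+1)) : Q T := Sum.inr (Sum.inl k)
abbrev qS : Q T := Sum.inr (Sum.inr ())

def deg : Q T → ℕ
  | Sum.inl k => k
  | Sum.inr (Sum.inl k) => (k : ℕ) + 1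
  | Sum.inr (Sum.inr _) => 4*T+2

/-- product of two path shapes: resulting shape and coefficient. -/
def qm (K : Type) [Field K] {T : ℕ} : Q T → Q T → Q T × K
  | Sum.inl k, Sum.inl l =>
      if h : (k : ℕ) + l ≤ 4*T+1 then (qX ⟨(k:ℕ)+l, by omega⟩, 1)
      else if (k : ℕ) + l = 4*T+2 then (qS, 1) else (qS, 0)
  | Sum.inl k, Sum.inr (Sum.inl l) => (qY l, if (k : ℕ) = 0 then 1 else 0)
  | Sum.inl k, Sum.inr (Sum.inr _) => (qS, if (k : ℕ) = 0 then 1 else 0)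
  | Sum.inr (Sum.inl k), Sum.inl l => (qY k, if (l : ℕ) = 0 then 1 else 0)
  | Sum.inr (Sum.inl k), Sum.inr (Sum.inl l) =>
      if h : (k : ℕ) + l + 2 ≤ 4*T+1 then (qY ⟨(k:ℕ)+l+1, by omega⟩, 1)
      else if (k : ℕ) + l + 2 = 4*T+2 then (qS, -1) else (qS, 0)
  | Sum.inr (Sum.inl _), Sum.inr (Sum.inr _) => (qS, 0)
  | Sum.inr (Sum.inr _), Sum.inl l => (qS, if (l : ℕ) = 0 then 1 else 0)
  | Sum.inr (Sum.inr _), Sum.inr _ => (qS, 0)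

set_option maxHeartbeats 1000000 in
lemma qm_deg : ∀ u v : Q T, (qm K u v).2 ≠ 0 → deg (qm K u v).1 = deg u + deg v := by
  rintro (k | k | _) (l | l | _) h <;>
    simp only [qm, qX, qY, qS] at h ⊢ <;>
    (try split_ifs at h ⊢) <;>
    simp only [deg, qX, qY, qS] <;>
    first
      | exact absurd rfl h
      | omega
      | (exfalso; simp only [ne_eq, not_true_eq_false] at h; exact h (by norm_num))
      | simp_all

lemma qm_one_left (v : Q T) : qm K (qX 0) v = (v, 1) := by
  rcases v with k | k | u
  · simp only [qm, qX]
    rw [dif_pos (by simp; omega)]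
    simp
  · simp [qm, qX, qY]
  · simp [qm, qX, qS]

lemma qm_one_right (v : Q T) : qm K v (qX 0) = (v, 1) := by
  rcases v with k | k | u
  · simp only [qm, qX]
    rw [dif_pos (by simp; omega)]
    simp
  · simp [qm, qX, qY]
  · simp [qm, qX, qS]

set_option maxHeartbeats 4000000 in
lemma qm_assoc (u v w : Q T) :
    (qm K u v).2 * (qm K (qm K u v).1 w).2 = (qm K v w).2 * (qm K u (qm K v w).1).2 ∧
    ((qm K u v).2 * (qm K (qm K u v).1 w).2 ≠ 0 →
      (qm K (qm K u v).1 w).1 = (qm K u (qm K v w).1).1) := by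
  rcases u with k | k | _ <;> rcases v with l | l | _ <;> rcases w with m | m | _ <;>
    simp only [qm, qX, qY, qS] <;>
    (repeat' (first | split_ifs | simp only [qm, qX, qY, qS])) <;>
    refine ⟨?_, ?_⟩ <;>
    first
      | rfl
      | omega
      | (exfalso; omega)
      | (norm_num; done)
      | (intro hne; first
          | rfl
          | (norm_num at hne; done)
          | (exfalso; omega)
          | (simp only [qX, qY, qS, Sum.inl.injEq, Sum.inr.injEq, Fin.mk.injEq]; omega)
          | (norm_num; done)
          | (simp_all; done))
      | (intros; omega)
      | (simp_all; done)


/-! ## The model algebra `B` -/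

abbrev Bas (T : ℕ) : Type := Fin 4 × Q T

def tgt (p : Bas T) : Fin 4 := p.1 + ((deg p.2 : ℕ) : Fin 4)

def B (K : Type) (T : ℕ) : Type := Bas T → K

instance : AddCommGroup (B K T) := inferInstanceAs (AddCommGroup (Bas T → K))
instance : Module K (B K T) := inferInstanceAs (Module K (Bas T → K))

def bE (K : Type) [Field K] {T : ℕ} (p : Bas T) : B K T := Pi.single p 1

@[simp] lemma B_smul_apply (k : K) (f : B K T) (b : Bas T) : (k • f) b = k * f b := rfl
@[simp] lemma B_add_apply (f g : B K T) (b : Bas T) : (f + g) b = f b + g b := rfl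
@[simp] lemma B_zero_apply (b : Bas T) : (0 : B K T) b = 0 := rfl
@[simp] lemma B_neg_apply (f : B K T) (b : Bas T) : (-f) b = -(f b) := rfl
@[simp] lemma B_sub_apply (f g : B K T) (b : Bas T) : (f - g) b = f b - g b := rfl

lemma B_sum_apply {ι : Type*} (s : Finset ι) (F : ι → B K T) (b : Bas T) :
    (∑ i ∈ s, F i) b = ∑ i ∈ s, F i b := by
  classical
  induction s using Finset.induction_on with
  | empty => simp
  | insert _ _ h ih => rename_i a s'; rw [Finset.sum_insert h, Finset.sum_insert h, B_add_apply, ih]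

@[simp] lemma bE_apply (p b : Bas T) : bE K p b = if b = p then 1 else 0 := by
  rw [bE]; exact Pi.single_apply p 1 b

def εB (K : Type) [Field K] {T : ℕ} (p q : Bas T) : K :=
  if q.1 = tgt p then (qm K p.2 q.2).2 else 0

def σB (K : Type) [Field K] {T : ℕ} (p q : Bas T) : Bas T := (p.1, (qm K p.2 q.2).1)

def cB (K : Type) [Field K] {T : ℕ} (p q : Bas T) : B K T :=
  εB K p q • bE K (σB K p q)

def mulB (f g : B K T) : B K T := ∑ p : Bas T, ∑ q : Bas T, (f p * g q) • cB K p q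

lemma cB_apply (p q b : Bas T) : cB K p q b = if b = σB K p q then εB K p q else 0 := by
  rw [cB]
  by_cases hb : b = σB K p q <;> simp [hb]

lemma keyε (p q r : Bas T) :
    εB K p q * εB K (σB K p q) r = εB K q r * εB K p (σB K q r) := by
  by_cases h1 : q.1 = tgt p
  · by_cases hc : (qm K p.2 q.2).2 = 0
    · have h0 : εB K p q = 0 := by rw [εB, if_pos h1, hc]
      rw [h0, zero_mul]
      rcases eq_or_ne r.1 (tgt q) with h2 | h2
      · have := (qm_assoc (K := K) p.2 q.2 r.2).1
        rw [hc, zero_mul] at this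
        rw [εB, if_pos h2, εB, σB]
        simp only [σB]
        rw [if_pos h1, ← this]
      · rw [εB, if_neg h2, zero_mul]
    · have hdeg := qm_deg (K := K) p.2 q.2 hc
      have htgt : tgt (σB K p q) = tgt q := by
        simp only [tgt, σB, hdeg, h1, Nat.cast_add]
        simp [tgt, add_assoc]
      rcases eq_or_ne r.1 (tgt q) with h2 | h2
      · rw [εB, if_pos h1, εB, htgt, if_pos h2, εB, if_pos h2, εB, σB]
        rw [if_pos (show (σB K q r).1 = tgt p from h1)]
        exact (qm_assoc (K := K) p.2 q.2 r.2).1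
      · rw [show εB K (σB K p q) r = 0 from by rw [εB, htgt, if_neg h2],
          show εB K q r = 0 from by rw [εB, if_neg h2], mul_zero, zero_mul]
  · have hfst : (σB K q r).1 = q.1 := rfl
    rw [εB, if_neg h1, zero_mul, show εB K p (σB K q r) = 0 from by rw [εB, hfst, if_neg h1],
      mul_zero]

lemma keyσ (p q r : Bas T) (h : εB K p q * εB K (σB K p q) r ≠ 0) :
    σB K (σB K p q) r = σB K p (σB K q r) := by
  have h1 : εB K p q ≠ 0 := left_ne_zero_of_mul h
  have h2 : εB K (σB K p q) r ≠ 0 := right_ne_zero_of_mul h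
  have hc1 : (qm K p.2 q.2).2 ≠ 0 := by
    intro hc; apply h1; rw [εB, hc]; simp
  have hc2 : (qm K (qm K p.2 q.2).1 r.2).2 ≠ 0 := by
    intro hc; apply h2; rw [εB, σB]; simp only; rw [hc]; simp
  have := (qm_assoc (K := K) p.2 q.2 r.2).2 (mul_ne_zero hc1 hc2)
  simp only [σB, this]

lemma key_cB (p q r : Bas T) :
    εB K p q • cB K (σB K p q) r = εB K q r • cB K p (σB K q r) := by
  by_cases h : εB K p q * εB K (σB K p q) r = 0
  · have h' : εB K q r * εB K p (σB K q r) = 0 := by rw [← keyε (K := K) p q r]; exact h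
    rw [cB, cB, smul_smul, smul_smul, h, h', zero_smul, zero_smul]
  · rw [cB, cB, smul_smul, smul_smul, keyε (K := K) p q r, keyσ (K := K) p q r h]

lemma mulB_apply (f g : B K T) (b : Bas T) :
    mulB f g b = ∑ p : Bas T, ∑ q : Bas T, (f p * g q) * cB K p q b := by
  rw [mulB, B_sum_apply]
  refine Finset.sum_congr rfl fun p _ => ?_
  rw [B_sum_apply]
  exact Finset.sum_congr rfl fun q _ => rfl

lemma mulB_add_left (f f' g : B K T) : mulB (f + f') g = mulB f g + mulB f' g := by
  funext b; simp [mulB_apply, add_mul, Finset.sum_add_distrib]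

lemma mulB_add_right (f g g' : B K T) : mulB f (g + g') = mulB f g + mulB f g' := by
  funext b; simp [mulB_apply, mul_add, add_mul, Finset.sum_add_distrib]

lemma mulB_smul_left (k : K) (f g : B K T) : mulB (k • f) g = k • mulB f g := by
  funext b; simp [mulB_apply, Finset.mul_sum, mul_assoc]

lemma mulB_smul_right (k : K) (f g : B K T) : mulB f (k • g) = k • mulB f g := by
  funext b
  simp only [mulB_apply, B_smul_apply, Finset.mul_sum]
  refine Finset.sum_congr rfl fun p _ => Finset.sum_congr rfl fun q _ => by ring

lemma mulB_zero_left (g : B K T) : mulB 0 g = 0 := by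
  funext b; simp [mulB_apply]

lemma mulB_zero_right (f : B K T) : mulB f 0 = 0 := by
  funext b; simp [mulB_apply]

lemma mulB_sum_left {ι : Type*} (s : Finset ι) (F : ι → B K T) (g : B K T) :
    mulB (∑ i ∈ s, F i) g = ∑ i ∈ s, mulB (F i) g := by
  classical
  induction s using Finset.induction_on with
  | empty => simp [mulB_zero_left]
  | insert _ _ h ih =>
      rename_i a s'
      rw [Finset.sum_insert h, Finset.sum_insert h, mulB_add_left, ih]

lemma mulB_sum_right {ι : Type*} (s : Finset ι) (F : ι → B K T) (f : B K T) :
    mulB f (∑ i ∈ s, F i) = ∑ i ∈ s, mulB f (F i) := by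
  classical
  induction s using Finset.induction_on with
  | empty => simp [mulB_zero_right]
  | insert _ _ h ih =>
      rename_i a s'
      rw [Finset.sum_insert h, Finset.sum_insert h, mulB_add_right, ih]

lemma mulB_single_left (p : Bas T) (g : B K T) :
    mulB (bE K p) g = ∑ q : Bas T, g q • cB K p q := by
  funext b
  rw [mulB_apply, B_sum_apply]
  rw [Finset.sum_eq_single p]
  · exact Finset.sum_congr rfl fun q _ => by simp
  · intro p' _ hp'
    simp [bE_apply, hp']
  · intro h; exact absurd (Finset.mem_univ p) h

lemma mulB_single_right (q : Bas T) (f : B K T) :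
    mulB f (bE K q) = ∑ p : Bas T, f p • cB K p q := by
  funext b
  rw [mulB_apply, B_sum_apply]
  refine Finset.sum_congr rfl fun p _ => ?_
  rw [Finset.sum_eq_single q]
  · simp
  · intro q' _ hq'; simp [bE_apply, hq']
  · intro h; exact absurd (Finset.mem_univ q) h

lemma mulB_single_single (p q : Bas T) : mulB (bE K p) (bE K q) = cB K p q := by
  rw [mulB_single_left, Finset.sum_eq_single q]
  · simp
  · intro q' _ hq'; simp [bE_apply, hq']
  · intro h; exact absurd (Finset.mem_univ q) h

lemma B_eq_sum (f : B K T) : f = ∑ b : Bas T, f b • bE K b := by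
  funext b'
  rw [B_sum_apply, Finset.sum_eq_single b']
  · simp
  · intro b _ hb; simp [bE_apply, Ne.symm hb]
  · intro h; exact absurd (Finset.mem_univ b') h

lemma mulB_bE_assoc (p q r : Bas T) :
    mulB (mulB (bE K p) (bE K q)) (bE K r) = mulB (bE K p) (mulB (bE K q) (bE K r)) := by
  rw [mulB_single_single, mulB_single_single, cB, cB, mulB_smul_left, mulB_smul_right,
    mulB_single_single, mulB_single_single]
  exact key_cB p q r

lemma mulB_assoc (f g h : B K T) : mulB (mulB f g) h = mulB f (mulB g h) := by
  conv_lhs => rw [B_eq_sum f, B_eq_sum g, B_eq_sum h]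
  conv_rhs => rw [B_eq_sum f, B_eq_sum g, B_eq_sum h]
  rw [mulB_sum_left, mulB_sum_right]
  simp only [mulB_sum_left, mulB_sum_right, mulB_smul_left, mulB_smul_right, smul_smul,
    Finset.smul_sum]
  refine Finset.sum_congr rfl fun p _ => ?_
  rw [Finset.sum_comm]
  refine Finset.sum_congr rfl fun q _ => ?_
  refine Finset.sum_congr rfl fun r _ => ?_
  first
    | rfl
    | (rw [mulB_bE_assoc]; ring_nf)
    | ring_nf
    | (rw [mulB_bE_assoc])

def oneB (K : Type) [Field K] (T : ℕ) : B K T := ∑ i : Fin 4, bE K (i, qX 0)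

lemma tgt_E (i : Fin 4) : tgt ((i, qX (0 : Fin (4*T+2))) : Bas T) = i := by
  simp [tgt, deg, qX]

lemma mulB_oneB (f : B K T) : mulB f (oneB K T) = f := by
  rw [oneB, mulB_sum_right]
  simp only [mulB_single_right]
  rw [Finset.sum_comm]
  have hc : ∀ (p : Bas T) (i : Fin 4),
      cB K p (i, qX 0) = (if i = tgt p then (1:K) else 0) • bE K p := by
    intro p i
    rw [cB, εB, σB]
    have h1 : qm K p.2 (qX 0 : Q T) = (p.2, 1) := qm_one_right p.2
    rw [h1]
  have : ∀ p : Bas T, ∑ i : Fin 4, f p • cB K p (i, qX 0) = f p • bE K p := by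
    intro p
    simp only [hc, smul_smul]
    rw [Finset.sum_eq_single (tgt p)]
    · simp
    · intro i _ hi
      rw [if_neg hi, mul_zero, zero_smul]
    · intro h; exact absurd (Finset.mem_univ _) h
  rw [Finset.sum_congr rfl fun p _ => this p]
  exact (B_eq_sum f).symm

lemma oneB_mulB (f : B K T) : mulB (oneB K T) f = f := by
  rw [oneB, mulB_sum_left]
  simp only [mulB_single_left]
  rw [Finset.sum_comm]
  have hc : ∀ (q : Bas T) (i : Fin 4),
      cB K (i, qX 0) q = (if q.1 = i then (1:K) else 0) • bE K (i, q.2) := by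
    intro q i
    rw [cB, εB, σB]
    have h1 : qm K (qX 0 : Q T) q.2 = (q.2, 1) := qm_one_left q.2
    rw [h1, tgt_E]
  have : ∀ q : Bas T, ∑ i : Fin 4, f q • cB K (i, qX 0) q = f q • bE K q := by
    intro q
    simp only [hc, smul_smul]
    rw [Finset.sum_eq_single q.1]
    · simp
    · intro i _ hi
      rw [if_neg (fun h => hi h.symm), mul_zero, zero_smul]
    · intro h; exact absurd (Finset.mem_univ _) h
  rw [Finset.sum_congr rfl fun q _ => this q]
  exact (B_eq_sum f).symm

noncomputable instance : Ring (B K T) where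
  __ := (inferInstance : AddCommGroup (B K T))
  mul := mulB
  one := oneB K T
  mul_assoc := mulB_assoc
  one_mul := oneB_mulB
  mul_one := mulB_oneB
  left_distrib := fun a b c => mulB_add_right a b c
  right_distrib := fun a b c => mulB_add_left a b c
  zero_mul := mulB_zero_left
  mul_zero := mulB_zero_right

lemma B_mul_def (f g : B K T) : f * g = mulB f g := rfl
lemma B_one_def : (1 : B K T) = oneB K T := rfl

noncomputable instance : Algebra K (B K T) :=
  Algebra.ofModule (fun k f g => mulB_smul_left k f g) (fun k f g => mulB_smul_right k f g)

/-! ## powers in `B` -/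

lemma bE_mul (p q : Bas T) : bE K p * bE K q = cB K p q := mulB_single_single p q

lemma qm_XX {k l : Fin (4*T+2)} (h : (k:ℕ) + l ≤ 4*T+1) :
    qm K (qX k) (qX l) = (qX ⟨(k:ℕ)+(l:ℕ), by omega⟩, 1) := by
  simp only [qm, qX]
  rw [dif_pos h]

lemma qm_XX_top {k l : Fin (4*T+2)} (h : (k:ℕ) + l = 4*T+2) :
    qm K (qX k) (qX l) = (qS, 1) := by
  simp only [qm, qX]
  rw [dif_neg (by omega), if_pos h]

lemma qm_YY {k l : Fin (4*T+1)} (h : (k:ℕ) + l + 2 ≤ 4*T+1) :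
    qm K (qY k) (qY l) = (qY ⟨(k:ℕ)+(l:ℕ)+1, by omega⟩, 1) := by
  simp only [qm, qY]
  rw [dif_pos h]

lemma qm_YY_top {k l : Fin (4*T+1)} (h : (k:ℕ) + l + 2 = 4*T+2) :
    qm K (qY k) (qY l) = (qS, -1) := by
  simp only [qm, qY]
  rw [dif_neg (by omega), if_pos h]

lemma qm_XY (k : Fin (4*T+2)) (l : Fin (4*T+1)) :
    qm K (qX k) (qY l) = (qY l, if (k:ℕ) = 0 then 1 else 0) := rfl

lemma qm_YX (k : Fin (4*T+1)) (l : Fin (4*T+2)) :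
    qm K (qY k) (qX l) = (qY k, if (l:ℕ) = 0 then 1 else 0) := rfl

lemma sum_cB_right (p : Bas T) (v : Q T) :
    ∑ j : Fin 4, cB K p (j, v) = (qm K p.2 v).2 • bE K (p.1, (qm K p.2 v).1) := by
  simp only [cB, εB, σB]
  rw [Finset.sum_eq_single (tgt p)]
  · rw [if_pos rfl]
  · intro j _ hj
    rw [if_neg hj, zero_smul]
  · intro h; exact absurd (Finset.mem_univ _) h

lemma mul_sum_bE (p : Bas T) (v : Q T) :
    bE K p * (∑ j : Fin 4, bE K (j, v)) = (qm K p.2 v).2 • bE K (p.1, (qm K p.2 v).1) := by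
  rw [Finset.mul_sum]
  simp only [bE_mul]
  exact sum_cB_right p v

noncomputable def xB (K : Type) [Field K] (T : ℕ) : B K T := ∑ i : Fin 4, bE K (i, qX ⟨1, by omega⟩)
noncomputable def yB (K : Type) [Field K] (T : ℕ) : B K T := ∑ i : Fin 4, bE K (i, qY ⟨0, by omega⟩)

lemma xB_pow (n : ℕ) (h : n ≤ 4*T+1) :
    xB K T ^ n = ∑ i : Fin 4, bE K (i, qX ⟨n, by omega⟩) := by
  induction n with
  | zero =>
      rw [pow_zero, B_one_def, oneB]
      rfl
  | succ n ih =>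
      rw [pow_succ, ih (by omega), xB, Finset.sum_mul]
      refine Finset.sum_congr rfl fun i _ => ?_
      rw [mul_sum_bE, qm_XX (by simpa using by omega : ((⟨n, by omega⟩ : Fin (4*T+2)) : ℕ) + ((⟨1, by omega⟩ : Fin (4*T+2)) : ℕ) ≤ 4*T+1)]
      simp only [one_smul]

lemma xB_pow_top : xB K T ^ (4*T+2) = ∑ i : Fin 4, bE K (i, qS) := by
  rw [pow_succ, xB_pow (4*T+1) le_rfl, xB, Finset.sum_mul]
  refine Finset.sum_congr rfl fun i _ => ?_
  rw [mul_sum_bE, qm_XX_top (by simp)]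
  simp only [one_smul]

lemma yB_pow (n : ℕ) (h : n ≤ 4*T) :
    yB K T ^ (n+1) = ∑ i : Fin 4, bE K (i, qY ⟨n, by omega⟩) := by
  induction n with
  | zero =>
      rw [pow_one, yB]
  | succ n ih =>
      rw [pow_succ, ih (by omega), yB, Finset.sum_mul]
      refine Finset.sum_congr rfl fun i _ => ?_
      rw [mul_sum_bE, qm_YY (by simp; omega)]
      simp only [one_smul]

lemma yB_pow_top : yB K T ^ (4*T+2) = -∑ i : Fin 4, bE K (i, qS) := by
  have : (4*T+2) = (4*T) + 1 + 1 := by ring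
  rw [this, pow_succ, yB_pow (4*T) le_rfl, yB, Finset.sum_mul, ← Finset.sum_neg_distrib]
  refine Finset.sum_congr rfl fun i _ => ?_
  rw [mul_sum_bE, qm_YY_top (by simp)]
  simp only [neg_smul, one_smul]

end ATModel


variable (K : Type) [Field K]

variable (T : ℕ)

open ATModel

lemma bE_E_mul (i j : Fin 4) (v : Q T) :
    bE K (i, qX 0) * bE K (j, v) = if j = i then bE K (i, v) else 0 := by
  rw [bE_mul, cB, εB, σB, tgt_E, qm_one_left]
  by_cases h : j = i <;> simp [h]

lemma tgt_mk (i : Fin 4) (v : Q T) : tgt ((i, v) : Bas T) = i + ((deg v : ℕ) : Fin 4) := rfl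

lemma bE_mul_E (i : Fin 4) (v : Q T) (j : Fin 4) :
    bE K (i, v) * bE K (j, qX 0) = if j = tgt ((i, v) : Bas T) then bE K (i, v) else 0 := by
  rw [bE_mul, cB, εB, σB, qm_one_right]
  by_cases h : j = tgt ((i, v) : Bas T) <;> simp [h]

/-- images of the generators in the model algebra -/
noncomputable def bgen : Gen → B K T
  | .e i => bE K (i, qX 0)
  | .a i => bE K (i, qX ⟨1, by omega⟩)
  | .b i => bE K (i, qY ⟨0, by omega⟩)

noncomputable def FB : FreeAlgebra K Gen →ₐ[K] B K T := FreeAlgebra.lift K (bgen K T)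

@[simp] lemma FB_e (i : Fin 4) : FB K T (FreeAlgebra.ι K (Gen.e i)) = bE K (i, qX 0) := by
  rw [FB, FreeAlgebra.lift_ι_apply]; rfl

@[simp] lemma FB_a (i : Fin 4) : FB K T (FreeAlgebra.ι K (Gen.a i)) = bE K (i, qX ⟨1, by omega⟩) := by
  rw [FB, FreeAlgebra.lift_ι_apply]; rfl

@[simp] lemma FB_b (i : Fin 4) : FB K T (FreeAlgebra.ι K (Gen.b i)) = bE K (i, qY ⟨0, by omega⟩) := by
  rw [FB, FreeAlgebra.lift_ι_apply]; rfl

lemma FB_gx : FB K T (gx K) = xB K T := by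
  rw [gx, map_sum, xB]
  exact Finset.sum_congr rfl fun i _ => FB_a K T i

lemma FB_gy : FB K T (gy K) = yB K T := by
  rw [gy, map_sum, yB]
  exact Finset.sum_congr rfl fun i _ => FB_b K T i

lemma xB_mul_yB : xB K T * yB K T = 0 := by
  rw [xB, Finset.sum_mul]
  rw [Finset.sum_eq_zero]
  intro i _
  rw [yB, mul_sum_bE]
  norm_num [qm_XY]

lemma yB_mul_xB : yB K T * xB K T = 0 := by
  rw [yB, Finset.sum_mul]
  rw [Finset.sum_eq_zero]
  intro i _
  rw [xB, mul_sum_bE]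
  norm_num [qm_YX]

lemma FB_rel : ∀ ⦃x y : FreeAlgebra K Gen⦄, ATRel K T x y → FB K T x = FB K T y := by
  intro x y h
  induction h with
  | ee i j =>
      rw [map_mul, FB_e, FB_e, bE_E_mul]
      by_cases h : i = j
      · subst h; simp
      · rw [if_neg (fun hh => h hh.symm), if_neg h, map_zero]
  | sum =>
      rw [map_sum, map_one]
      rw [show (1 : B K T) = oneB K T from rfl, oneB]
      exact Finset.sum_congr rfl fun i _ => FB_e K T i
  | ea i => rw [map_mul, FB_e, FB_a, bE_E_mul, if_pos rfl]
  | ae i =>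
      rw [map_mul, FB_a, FB_e, bE_mul_E, if_pos]
      simp [tgt_mk, deg, qX]
  | eb i => rw [map_mul, FB_e, FB_b, bE_E_mul, if_pos rfl]
  | be i =>
      rw [map_mul, FB_b, FB_e, bE_mul_E, if_pos]
      simp [tgt_mk, deg, qY]
  | xy => rw [map_mul, FB_gx, FB_gy, xB_mul_yB, map_zero]
  | yx => rw [map_mul, FB_gy, FB_gx, yB_mul_xB, map_zero]
  | xy_pow =>
      rw [map_add, map_pow, map_pow, FB_gx, FB_gy, map_zero, xB_pow_top, yB_pow_top]
      exact add_neg_cancel _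

/-- the comparison map `A_T → B`. -/
noncomputable def φAT : AT K T →ₐ[K] B K T :=
  show RingQuot (ATRel K T) →ₐ[K] B K T from
    RingQuot.liftAlgHom K ⟨FB K T, FB_rel K T⟩

lemma φAT_mk (x : FreeAlgebra K Gen) :
    φAT K T (RingQuot.mkAlgHom K (ATRel K T) x) = FB K T x :=
  RingQuot.liftAlgHom_mkAlgHom_apply _ _ _ _

@[simp] lemma φAT_eA (i : Fin 4) : φAT K T (eA K T i) = bE K (i, qX 0) := by
  rw [eA, φAT_mk, FB_e]

@[simp] lemma φAT_xA : φAT K T (xA K T) = xB K T := by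
  rw [xA, φAT_mk, FB_gx]

@[simp] lemma φAT_yA : φAT K T (yA K T) = yB K T := by
  rw [yA, φAT_mk, FB_gy]


/-! ## Relations in `A_T` -/

/-- image of the arrow `a i` in `A_T`. -/
noncomputable def aA (i : Fin 4) : AT K T :=
  show RingQuot (ATRel K T) from RingQuot.mkAlgHom K (ATRel K T) (FreeAlgebra.ι K (Gen.a i))

/-- image of the arrow `b i` in `A_T`. -/
noncomputable def bA (i : Fin 4) : AT K T :=
  show RingQuot (ATRel K T) from RingQuot.mkAlgHom K (ATRel K T) (FreeAlgebra.ι K (Gen.b i))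

lemma eA_mul_eA (i j : Fin 4) :
    eA K T i * eA K T j = if i = j then eA K T i else 0 := by
  have h := RingQuot.mkAlgHom_rel K (ATRel.ee (K := K) (T := T) i j)
  rw [map_mul] at h
  by_cases hij : i = j
  · subst hij
    rw [if_pos rfl] at h ⊢
    exact h
  · rw [if_neg hij] at h ⊢
    rw [eA, eA]
    exact h.trans (map_zero _)

lemma sum_eA : ∑ i : Fin 4, eA K T i = 1 := by
  have h := RingQuot.mkAlgHom_rel K (ATRel.sum (K := K) (T := T))
  rw [map_sum, map_one] at h
  exact h

lemma eA_mul_aA_self (i : Fin 4) : eA K T i * aA K T i = aA K T i := by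
  have h := RingQuot.mkAlgHom_rel K (ATRel.ea (K := K) (T := T) i)
  rw [map_mul] at h
  exact h

lemma aA_mul_eA_self (i : Fin 4) : aA K T i * eA K T (i+1) = aA K T i := by
  have h := RingQuot.mkAlgHom_rel K (ATRel.ae (K := K) (T := T) i)
  rw [map_mul] at h
  exact h

lemma eA_mul_bA_self (i : Fin 4) : eA K T i * bA K T i = bA K T i := by
  have h := RingQuot.mkAlgHom_rel K (ATRel.eb (K := K) (T := T) i)
  rw [map_mul] at h
  exact h

lemma bA_mul_eA_self (i : Fin 4) : bA K T i * eA K T (i+1) = bA K T i := by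
  have h := RingQuot.mkAlgHom_rel K (ATRel.be (K := K) (T := T) i)
  rw [map_mul] at h
  exact h

lemma xA_mul_yA : xA K T * yA K T = 0 := by
  have h := RingQuot.mkAlgHom_rel K (ATRel.xy (K := K) (T := T))
  rw [map_mul, map_zero] at h
  exact h

lemma yA_mul_xA : yA K T * xA K T = 0 := by
  have h := RingQuot.mkAlgHom_rel K (ATRel.yx (K := K) (T := T))
  rw [map_mul, map_zero] at h
  exact h

lemma xA_pow_add_yA_pow : xA K T ^ (4*T+2) + yA K T ^ (4*T+2) = 0 := by
  have h := RingQuot.mkAlgHom_rel K (ATRel.xy_pow (K := K) (T := T))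
  rw [map_add, map_pow, map_pow, map_zero] at h
  exact h

lemma xA_pow_top_eq : xA K T ^ (4*T+2) = -(yA K T ^ (4*T+2)) :=
  eq_neg_of_add_eq_zero_left (xA_pow_add_yA_pow K T)

lemma yA_pow_top_eq : yA K T ^ (4*T+2) = -(xA K T ^ (4*T+2)) :=
  eq_neg_of_add_eq_zero_right (xA_pow_add_yA_pow K T)

lemma eA_mul_aA (i j : Fin 4) :
    eA K T i * aA K T j = if j = i then aA K T i else 0 := by
  rw [← eA_mul_aA_self, ← mul_assoc, eA_mul_eA]
  by_cases h : j = i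
  · subst h; rw [if_pos rfl, if_pos rfl, eA_mul_aA_self]
  · rw [if_neg (fun hh => h hh.symm), if_neg h, zero_mul]

lemma eA_mul_bA (i j : Fin 4) :
    eA K T i * bA K T j = if j = i then bA K T i else 0 := by
  rw [← eA_mul_bA_self, ← mul_assoc, eA_mul_eA]
  by_cases h : j = i
  · subst h; rw [if_pos rfl, if_pos rfl, eA_mul_bA_self]
  · rw [if_neg (fun hh => h hh.symm), if_neg h, zero_mul]

lemma aA_mul_eA (i j : Fin 4) :
    aA K T j * eA K T (i+1) = if j = i then aA K T i else 0 := by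
  rw [← aA_mul_eA_self, mul_assoc, eA_mul_eA]
  by_cases h : j = i
  · subst h; rw [if_pos rfl, if_pos rfl, aA_mul_eA_self]
  · rw [if_neg (by simpa using h), if_neg h, mul_zero]

lemma bA_mul_eA (i j : Fin 4) :
    bA K T j * eA K T (i+1) = if j = i then bA K T i else 0 := by
  rw [← bA_mul_eA_self, mul_assoc, eA_mul_eA]
  by_cases h : j = i
  · subst h; rw [if_pos rfl, if_pos rfl, bA_mul_eA_self]
  · rw [if_neg (by simpa using h), if_neg h, mul_zero]

lemma xA_eq_sum : xA K T = ∑ i : Fin 4, aA K T i := by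
  rw [xA, gx, map_sum]; rfl

lemma yA_eq_sum : yA K T = ∑ i : Fin 4, bA K T i := by
  rw [yA, gy, map_sum]; rfl

lemma eA_mul_xA (i : Fin 4) : eA K T i * xA K T = aA K T i := by
  rw [xA_eq_sum, Finset.mul_sum]
  rw [Finset.sum_congr rfl fun j _ => eA_mul_aA K T i j]
  exact Finset.sum_ite_eq' _ i _ |>.trans (if_pos (Finset.mem_univ i))

lemma eA_mul_yA (i : Fin 4) : eA K T i * yA K T = bA K T i := by
  rw [yA_eq_sum, Finset.mul_sum]
  rw [Finset.sum_congr rfl fun j _ => eA_mul_bA K T i j]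
  exact Finset.sum_ite_eq' _ i _ |>.trans (if_pos (Finset.mem_univ i))

lemma xA_mul_eA (i : Fin 4) : xA K T * eA K T (i+1) = aA K T i := by
  rw [xA_eq_sum, Finset.sum_mul]
  rw [Finset.sum_congr rfl fun j _ => aA_mul_eA K T i j]
  exact Finset.sum_ite_eq' _ i _ |>.trans (if_pos (Finset.mem_univ i))

lemma yA_mul_eA (i : Fin 4) : yA K T * eA K T (i+1) = bA K T i := by
  rw [yA_eq_sum, Finset.sum_mul]
  rw [Finset.sum_congr rfl fun j _ => bA_mul_eA K T i j]
  exact Finset.sum_ite_eq' _ i _ |>.trans (if_pos (Finset.mem_univ i))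

lemma eA_comm_xA (i : Fin 4) : eA K T i * xA K T = xA K T * eA K T (i+1) := by
  rw [eA_mul_xA, xA_mul_eA]

lemma eA_comm_yA (i : Fin 4) : eA K T i * yA K T = yA K T * eA K T (i+1) := by
  rw [eA_mul_yA, yA_mul_eA]

lemma eA_comm_xA_pow (i : Fin 4) (n : ℕ) :
    eA K T i * xA K T ^ n = xA K T ^ n * eA K T (i + (n : Fin 4)) := by
  induction n with
  | zero => simp
  | succ n ih =>
      rw [pow_succ, ← mul_assoc, ih, mul_assoc, eA_comm_xA, ← mul_assoc, ← pow_succ]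
      congr 2
      push_cast
      rw [Fin.ext_iff]
      simp [Fin.val_add, Fin.val_natCast]
      omega

lemma eA_comm_yA_pow (i : Fin 4) (n : ℕ) :
    eA K T i * yA K T ^ n = yA K T ^ n * eA K T (i + (n : Fin 4)) := by
  induction n with
  | zero => simp
  | succ n ih =>
      rw [pow_succ, ← mul_assoc, ih, mul_assoc, eA_comm_yA, ← mul_assoc, ← pow_succ]
      congr 2
      push_cast
      rw [Fin.ext_iff]
      simp [Fin.val_add, Fin.val_natCast]
      omega

lemma xA_pow_mul_yA_pow (k m : ℕ) : xA K T ^ (k+1) * yA K T ^ (m+1) = 0 := by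
  rw [pow_succ, pow_succ', mul_assoc, ← mul_assoc (xA K T), xA_mul_yA, zero_mul, mul_zero]

lemma yA_pow_mul_xA_pow (k m : ℕ) : yA K T ^ (k+1) * xA K T ^ (m+1) = 0 := by
  rw [pow_succ, pow_succ', mul_assoc, ← mul_assoc (yA K T), yA_mul_xA, zero_mul, mul_zero]

lemma xA_pow_top_succ : xA K T ^ (4*T+3) = 0 := by
  have : (4*T+3) = (4*T+2) + 1 := rfl
  rw [this, pow_succ, xA_pow_top_eq, neg_mul, ← pow_one (xA K T),
    show (4*T+2) = (4*T+1)+1 from rfl, yA_pow_mul_xA_pow, neg_zero]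

lemma yA_pow_top_succ : yA K T ^ (4*T+3) = 0 := by
  have : (4*T+3) = (4*T+2) + 1 := rfl
  rw [this, pow_succ', yA_pow_top_eq, mul_neg, ← pow_one (yA K T),
    show (4*T+2) = (4*T+1)+1 from rfl, yA_pow_mul_xA_pow, neg_zero]

lemma xA_pow_eq_zero {m : ℕ} (h : 4*T+3 ≤ m) : xA K T ^ m = 0 := by
  obtain ⟨r, rfl⟩ := Nat.exists_eq_add_of_le h
  rw [pow_add, xA_pow_top_succ, zero_mul]

lemma yA_pow_eq_zero {m : ℕ} (h : 4*T+3 ≤ m) : yA K T ^ m = 0 := by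
  obtain ⟨r, rfl⟩ := Nat.exists_eq_add_of_le h
  rw [pow_add, yA_pow_top_succ, zero_mul]


/-! ## A spanning family of `A_T` indexed by `Bas T` -/

/-- powers of `x` and `y` corresponding to basis shapes. -/
noncomputable def pw : Q T → AT K T
  | Sum.inl k => xA K T ^ (k : ℕ)
  | Sum.inr (Sum.inl k) => yA K T ^ ((k : ℕ) + 1)
  | Sum.inr (Sum.inr _) => xA K T ^ (4*T+2)

lemma pw_deg_comm (i : Fin 4) (u : Q T) :
    eA K T i * pw K T u = pw K T u * eA K T (i + ((deg u : ℕ) : Fin 4)) := by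
  rcases u with k | k | c
  · rw [show pw K T (Sum.inl k) = xA K T ^ (k:ℕ) from rfl, eA_comm_xA_pow, show deg (Sum.inl k : Q T) = (k:ℕ) from rfl]
  · rw [show pw K T (Sum.inr (Sum.inl k)) = yA K T ^ ((k:ℕ)+1) from rfl, eA_comm_yA_pow,
      show deg (Sum.inr (Sum.inl k) : Q T) = (k:ℕ)+1 from rfl]
  · rw [show pw K T (Sum.inr (Sum.inr c)) = xA K T ^ (4*T+2) from rfl, eA_comm_xA_pow,
      show deg (Sum.inr (Sum.inr c) : Q T) = 4*T+2 from rfl]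

lemma pw_mul (u v : Q T) :
    pw K T u * pw K T v = (qm K u v).2 • pw K T ((qm K u v).1) := by
  rcases u with k | k | c <;> rcases v with l | l | c'
  · -- X * X
    show xA K T ^ (k:ℕ) * xA K T ^ (l:ℕ) = _
    rw [← pow_add]
    by_cases h : (k:ℕ) + l ≤ 4*T+1
    · rw [qm_XX h, one_smul]; rfl
    · by_cases h2 : (k:ℕ) + l = 4*T+2
      · rw [qm_XX_top h2, one_smul, h2]; rfl
      · simp only [qm, qX, qS]
        rw [dif_neg h, if_neg h2, xA_pow_eq_zero K T (m := (k:ℕ)+l) (by omega)]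
        simp
  · -- X * Y
    show xA K T ^ (k:ℕ) * yA K T ^ ((l:ℕ)+1) = _
    rw [qm_XY]
    by_cases h : (k:ℕ) = 0
    · rw [h, pow_zero, one_mul, if_pos rfl, one_smul]; rfl
    · obtain ⟨k', hk⟩ := Nat.exists_eq_succ_of_ne_zero h
      rw [hk, xA_pow_mul_yA_pow]
      simp [h]
  · -- X * S
    show xA K T ^ (k:ℕ) * xA K T ^ (4*T+2) = _
    simp only [qm, qX, qS]
    by_cases h : (k:ℕ) = 0
    · rw [h, pow_zero, one_mul, if_pos rfl, one_smul]; rfl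
    · rw [← pow_add, xA_pow_eq_zero K T (m := (k:ℕ)+(4*T+2)) (by omega)]
      simp [h]
  · -- Y * X
    show yA K T ^ ((k:ℕ)+1) * xA K T ^ (l:ℕ) = _
    rw [qm_YX]
    by_cases h : (l:ℕ) = 0
    · rw [h, pow_zero, mul_one, if_pos rfl, one_smul]; rfl
    · obtain ⟨l', hl⟩ := Nat.exists_eq_succ_of_ne_zero h
      rw [hl, yA_pow_mul_xA_pow]
      simp [h]
  · -- Y * Y
    show yA K T ^ ((k:ℕ)+1) * yA K T ^ ((l:ℕ)+1) = _
    rw [← pow_add]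
    by_cases h : (k:ℕ) + l + 2 ≤ 4*T+1
    · rw [qm_YY h, one_smul]
      show _ = yA K T ^ (((k:ℕ) + l + 1) + 1)
      congr 1
      omega
    · by_cases h2 : (k:ℕ) + l + 2 = 4*T+2
      · rw [qm_YY_top h2]
        have h3 : (k:ℕ) + 1 + ((l:ℕ) + 1) = 4*T+2 := by omega
        rw [h3, yA_pow_top_eq]
        show _ = (-1 : K) • xA K T ^ (4*T+2)
        rw [neg_one_smul]
      · simp only [qm, qY, qS]
        rw [dif_neg h, if_neg h2, yA_pow_eq_zero K T (m := (k:ℕ)+1+((l:ℕ)+1)) (by omega)]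
        simp
  · -- Y * S
    show yA K T ^ ((k:ℕ)+1) * xA K T ^ (4*T+2) = _
    simp only [qm, qY, qS]
    rw [zero_smul]
    exact yA_pow_mul_xA_pow K T k (4*T+1)
  · -- S * X
    show xA K T ^ (4*T+2) * xA K T ^ (l:ℕ) = _
    simp only [qm, qS, qX]
    by_cases h : (l:ℕ) = 0
    · rw [h, pow_zero, mul_one, if_pos rfl, one_smul]; rfl
    · rw [← pow_add, xA_pow_eq_zero K T (m := 4*T+2+(l:ℕ)) (by omega)]
      simp [h]
  · -- S * Y
    show xA K T ^ (4*T+2) * yA K T ^ ((l:ℕ)+1) = _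
    simp only [qm, qS, qY]
    rw [zero_smul]
    exact xA_pow_mul_yA_pow K T (4*T+1) l
  · -- S * S
    show xA K T ^ (4*T+2) * xA K T ^ (4*T+2) = _
    simp only [qm, qS]
    rw [← pow_add, xA_pow_eq_zero K T (m := 4*T+2+(4*T+2)) (by omega)]
    simp

/-- the spanning family of `A_T`. -/
noncomputable def w (b : Bas T) : AT K T := eA K T b.1 * pw K T b.2

lemma w_mul (p q : Bas T) :
    w K T p * w K T q = εB K p q • w K T (σB K p q) := by
  rw [w, w, εB, σB]
  by_cases hj : q.1 = tgt p
  · rw [if_pos hj, mul_assoc, ← mul_assoc (pw K T p.2), hj, tgt, ← pw_deg_comm,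
      ← mul_assoc, ← mul_assoc, eA_mul_eA, if_pos rfl, mul_assoc, pw_mul, mul_smul_comm]
    rfl
  · rw [if_neg hj, zero_smul, pw_deg_comm, mul_assoc, ← mul_assoc (eA K T (p.1 + _)),
      show p.1 + ((deg p.2 : ℕ) : Fin 4) = tgt p from rfl, eA_mul_eA,
      if_neg (fun hh => hj hh.symm), zero_mul, mul_zero]

lemma w_E (i : Fin 4) : w K T (i, qX 0) = eA K T i := by
  rw [w]
  show eA K T i * xA K T ^ ((0 : Fin (4*T+2)) : ℕ) = eA K T i
  rw [Fin.val_zero, pow_zero, mul_one]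

lemma one_mem_span : (1 : AT K T) ∈ Submodule.span K (Set.range (w K T)) := by
  rw [← sum_eA]
  refine Submodule.sum_mem _ fun i _ => ?_
  rw [← w_E]
  exact Submodule.subset_span (Set.mem_range_self _)

lemma mul_mem_span {z z' : AT K T}
    (hz : z ∈ Submodule.span K (Set.range (w K T)))
    (hz' : z' ∈ Submodule.span K (Set.range (w K T))) :
    z * z' ∈ Submodule.span K (Set.range (w K T)) := by
  induction hz, hz' using Submodule.span_induction₂ with
  | mem_mem a b ha hb =>
      obtain ⟨p, rfl⟩ := ha
      obtain ⟨q, rfl⟩ := hb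
      rw [w_mul]
      exact Submodule.smul_mem _ _ (Submodule.subset_span (Set.mem_range_self _))
  | zero_left _ _ => rw [zero_mul]; exact Submodule.zero_mem _
  | zero_right _ _ => rw [mul_zero]; exact Submodule.zero_mem _
  | add_left _ _ _ _ _ _ h1 h2 => rw [add_mul]; exact Submodule.add_mem _ h1 h2
  | add_right _ _ _ _ _ _ h1 h2 => rw [mul_add]; exact Submodule.add_mem _ h1 h2
  | smul_left r _ _ _ _ h => rw [smul_mul_assoc]; exact Submodule.smul_mem _ _ h
  | smul_right r _ _ _ _ h => rw [mul_smul_comm]; exact Submodule.smul_mem _ _ h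

lemma span_w_top (z : AT K T) : z ∈ Submodule.span K (Set.range (w K T)) := by
  obtain ⟨x, rfl⟩ := RingQuot.mkAlgHom_surjective K (ATRel K T) z
  induction x using FreeAlgebra.induction with
  | grade0 r =>
      rw [AlgHom.commutes, Algebra.algebraMap_eq_smul_one]
      exact Submodule.smul_mem _ _ (one_mem_span K T)
  | grade1 g =>
      rcases g with i | i | i
      · have : RingQuot.mkAlgHom K (ATRel K T) (FreeAlgebra.ι K (Gen.e i)) = w K T (i, qX 0) :=
          (w_E K T i).symm
        rw [this]
        exact Submodule.subset_span (Set.mem_range_self _)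
      · have : RingQuot.mkAlgHom K (ATRel K T) (FreeAlgebra.ι K (Gen.a i)) =
            w K T (i, qX ⟨1, by omega⟩) := by
          rw [w, show pw K T (qX ⟨1, by omega⟩ : Q T) = xA K T ^ ((1:ℕ)) from rfl, pow_one,
            eA_mul_xA]
          rfl
        rw [this]
        exact Submodule.subset_span (Set.mem_range_self _)
      · have : RingQuot.mkAlgHom K (ATRel K T) (FreeAlgebra.ι K (Gen.b i)) =
            w K T (i, qY ⟨0, by omega⟩) := by
          rw [w, show pw K T (qY ⟨0, by omega⟩ : Q T) = yA K T ^ ((0:ℕ)+1) from rfl, pow_one,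
            eA_mul_yA]
          rfl
        rw [this]
        exact Submodule.subset_span (Set.mem_range_self _)
  | mul a b ha hb => rw [map_mul]; exact mul_mem_span K T ha hb
  | add a b ha hb => rw [map_add]; exact Submodule.add_mem _ ha hb


/-! ## `φAT` is bijective -/

lemma bE_E_mul_sum (i : Fin 4) (v : Q T) :
    bE K (i, qX 0) * (∑ j : Fin 4, bE K (j, v)) = bE K (i, v) := by
  rw [Finset.mul_sum]
  rw [Finset.sum_congr rfl fun j _ => bE_E_mul K T i j v]
  exact Finset.sum_ite_eq' _ i _ |>.trans (if_pos (Finset.mem_univ i))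

lemma φAT_w (b : Bas T) : φAT K T (w K T b) = bE K b := by
  rcases b with ⟨i, k | k | c⟩
  · rw [w, map_mul, φAT_eA, show pw K T (Sum.inl k) = xA K T ^ (k:ℕ) from rfl, map_pow,
      φAT_xA, xB_pow (k:ℕ) (by omega), bE_E_mul_sum]
  · rw [w, map_mul, φAT_eA, show pw K T (Sum.inr (Sum.inl k)) = yA K T ^ ((k:ℕ)+1) from rfl,
      map_pow, φAT_yA, yB_pow (k:ℕ) (by omega), bE_E_mul_sum]
  · rw [w, map_mul, φAT_eA, show pw K T (Sum.inr (Sum.inr c)) = xA K T ^ (4*T+2) from rfl,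
      map_pow, φAT_xA, xB_pow_top, bE_E_mul_sum]

lemma φAT_surj : Function.Surjective (φAT K T) := by
  intro g
  refine ⟨∑ b : Bas T, g b • w K T b, ?_⟩
  rw [map_sum]
  simp only [map_smul, φAT_w]
  exact (B_eq_sum g).symm

lemma φAT_inj : Function.Injective (φAT K T) := by
  rw [injective_iff_map_eq_zero]
  intro z hz
  obtain ⟨c, hc⟩ := (Submodule.mem_span_range_iff_exists_fun K).mp (span_w_top K T z)
  have h2 : ∑ b : Bas T, c b • bE K b = 0 := by
    rw [← hz, ← hc, map_sum]
    simp only [map_smul, φAT_w]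
  have h3 : ∀ b : Bas T, c b = 0 := by
    intro b
    have h4 : (∑ b' : Bas T, c b' • bE K b') b = c b := by
      rw [B_sum_apply, Finset.sum_eq_single b]
      · simp
      · intro b' _ hb'
        rw [B_smul_apply, bE_apply, if_neg (fun h => hb' h.symm), mul_zero]
      · intro h; exact absurd (Finset.mem_univ _) h
    rw [h2] at h4
    exact h4.symm
  rw [← hc]
  exact Finset.sum_eq_zero fun b _ => by rw [h3 b, zero_smul]

/-- the comparison isomorphism. -/
noncomputable def eqAT : AT K T ≃ₐ[K] B K T :=
  AlgEquiv.ofBijective (φAT K T) ⟨φAT_inj K T, φAT_surj K T⟩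

lemma eqAT_apply (z : AT K T) : eqAT K T z = φAT K T z := rfl

/-! ## the Peirce projections in `B` -/

lemma E_mul_apply (i : Fin 4) (g : B K T) (b : Bas T) :
    ((bE K (i, qX 0) * g : B K T)) b = if b.1 = i then g b else 0 := by
  have hc : ∀ q : Bas T, cB K (i, qX 0) q = (if q.1 = i then (1:K) else 0) • bE K (i, q.2) := by
    intro q
    rw [cB, εB, σB, qm_one_left, tgt_E]
  rw [show (bE K (i, qX 0) * g : B K T) = mulB (bE K (i, qX 0)) g from rfl, mulB_single_left,
    B_sum_apply]
  simp only [hc, B_smul_apply, bE_apply]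
  by_cases hb : b.1 = i
  · rw [if_pos hb, Finset.sum_eq_single b]
    · rw [if_pos hb, one_mul, if_pos (show b = ((i, b.2) : Bas T) by rw [← hb]), mul_one]
    · intro q _ hq
      by_cases h1 : q.1 = i
      · rw [if_pos h1, one_mul, if_neg, mul_zero]
        intro h
        exact hq ((show q = ((i, q.2) : Bas T) by rw [← h1]).trans h.symm)
      · rw [if_neg h1, zero_mul, mul_zero]
    · intro h; exact absurd (Finset.mem_univ _) h
  · rw [if_neg hb, Finset.sum_eq_zero]
    intro q _
    rw [if_neg (show ¬ b = ((i, q.2) : Bas T) from fun h => hb (by rw [h])), mul_zero, mul_zero]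

lemma mul_E_apply (j : Fin 4) (g : B K T) (b : Bas T) :
    ((g * bE K (j, qX 0) : B K T)) b = if tgt b = j then g b else 0 := by
  have hc : ∀ p : Bas T, cB K p (j, qX 0) = (if j = tgt p then (1:K) else 0) • bE K p := by
    intro p
    rw [cB, εB, σB, qm_one_right]
  rw [show (g * bE K (j, qX 0) : B K T) = mulB g (bE K (j, qX 0)) from rfl, mulB_single_right,
    B_sum_apply]
  simp only [hc, B_smul_apply, bE_apply]
  rw [Finset.sum_eq_single b]
  · by_cases h : tgt b = j
    · rw [if_pos (show j = tgt b from h.symm), if_pos h, if_pos rfl, one_mul, mul_one]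
    · rw [if_neg (show ¬ j = tgt b from fun hh => h hh.symm), if_neg h, zero_mul, mul_zero]
  · intro p _ hp
    rw [if_neg (show ¬ b = p from fun h => hp h.symm), mul_zero, mul_zero]
  · intro h; exact absurd (Finset.mem_univ _) h

lemma MB_apply (i j : Fin 4) (g : B K T) (b : Bas T) :
    ((bE K (i, qX 0) * g * bE K (j, qX 0) : B K T)) b
      = if b.1 = i ∧ tgt b = j then g b else 0 := by
  rw [mul_E_apply, E_mul_apply]
  by_cases h1 : tgt b = j <;> by_cases h2 : b.1 = i <;> simp [h1, h2]

lemma finrank_rangeMB (i j : Fin 4) :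
    Module.finrank K (LinearMap.range ((LinearMap.mulLeft K (bE K (i, qX 0))).comp
        (LinearMap.mulRight K (bE K ((j, qX 0) : Bas T)))))
      = Fintype.card {b : Bas T // b.1 = i ∧ tgt b = j} := by
  classical
  set N := LinearMap.range ((LinearMap.mulLeft K (bE K (i, qX 0))).comp
    (LinearMap.mulRight K (bE K ((j, qX 0) : Bas T)))) with hN
  have hNmem : ∀ f : B K T, f ∈ N ↔ ∃ g : B K T, bE K (i, qX 0) * g * bE K (j, qX 0) = f := by
    intro f
    constructor
    · rintro ⟨g, rfl⟩
      exact ⟨g, by rw [LinearMap.comp_apply, LinearMap.mulRight_apply, LinearMap.mulLeft_apply,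
        mul_assoc]⟩
    · rintro ⟨g, rfl⟩
      exact ⟨g, by rw [LinearMap.comp_apply, LinearMap.mulRight_apply, LinearMap.mulLeft_apply,
        mul_assoc]⟩
  let ρ : N →ₗ[K] ({b : Bas T // b.1 = i ∧ tgt b = j} → K) :=
    { toFun := fun f s => f.1 s.1
      map_add' := fun f f' => rfl
      map_smul' := fun k f => rfl }
  have hinj : Function.Injective ρ := by
    intro f f' hff
    apply Subtype.ext
    funext b
    obtain ⟨g, hg⟩ := (hNmem f.1).mp f.2
    obtain ⟨g', hg'⟩ := (hNmem f'.1).mp f'.2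
    by_cases hb : b.1 = i ∧ tgt b = j
    · exact congrFun hff ⟨b, hb⟩
    · rw [← hg, ← hg', MB_apply, MB_apply, if_neg hb, if_neg hb]
  have hsurj : Function.Surjective ρ := by
    intro h
    set g : B K T := fun b => if hb : b.1 = i ∧ tgt b = j then h ⟨b, hb⟩ else 0 with hgdef
    have hg : bE K (i, qX 0) * g * bE K (j, qX 0) = g := by
      funext b
      rw [MB_apply]
      by_cases hb : b.1 = i ∧ tgt b = j
      · rw [if_pos hb]
      · rw [if_neg hb, hgdef]
        simp only
        rw [dif_neg hb]
    refine ⟨⟨g, (hNmem g).mpr ⟨g, hg⟩⟩, ?_⟩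
    funext s
    show g s.1 = h s
    rw [hgdef]
    simp only
    rw [dif_pos s.2]
  rw [(LinearEquiv.ofBijective ρ ⟨hinj, hsurj⟩).finrank_eq]
  exact Module.finrank_fintype_fun_eq_card K

/-! ## counting -/

lemma card_filter_mod (n r : ℕ) (hr : r < 4) :
    ((Finset.range n).filter (fun k => k % 4 = r)).card = (n + 3 - r)/4 := by
  induction n with
  | zero => simp; omega
  | succ n ih =>
      rw [Finset.range_add_one, Finset.filter_insert]
      by_cases h : n % 4 = r
      · rw [if_pos h, Finset.card_insert_of_notMem (by simp), ih]
        omega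
      · rw [if_neg h, ih]
        omega

lemma card_fin_mod (n r : ℕ) (hr : r < 4) :
    Fintype.card {k : Fin n // (k : ℕ) % 4 = r} = (n + 3 - r)/4 := by
  classical
  rw [Fintype.card_subtype, ← card_filter_mod n r hr, Finset.card_filter, Finset.card_filter]
  exact Fin.sum_univ_eq_sum_range (fun k => if k % 4 = r then 1 else 0) n

/-- The Peirce subspace `e_i A_T e_j`, realized as the range of the `K`-linear map
`a ↦ e_i * a * e_j`. -/
noncomputable def peirceSubspace (K : Type) [Field K] (T : ℕ) (i j : Fin 4) : Submodule K (AT K T) :=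
  LinearMap.range ((LinearMap.mulLeft K (eA K T i)).comp (LinearMap.mulRight K (eA K T j)))

lemma card_unit_subtype (P : Prop) [Decidable P] :
    Fintype.card {_c : Unit // P} = if P then 1 else 0 := by
  by_cases h : P <;> simp [h]

lemma fin4_cond (i j : Fin 4) (m : ℕ) :
    (i + ((m : ℕ) : Fin 4) = j) ↔ (m % 4 = ((j - i : Fin 4) : ℕ)) := by
  rcases i with ⟨iv, hi⟩
  rcases j with ⟨jv, hj⟩
  simp only [Fin.ext_iff, Fin.val_add, Fin.val_natCast, Fin.sub_def]
  omega

theorem dim_peirce (K : Type) [Field K] [IsAlgClosed K] (T : ℕ) (i j : Fin 4) :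
    Module.finrank K (peirceSubspace K T i j) =
      if j - i = (0 : Fin 4) then 2 * T + 1
      else if j - i = (1 : Fin 4) then 2 * T + 2
      else if j - i = (2 : Fin 4) then 2 * T + 1
      else 2 * T := by
  classical
  have hmap : (peirceSubspace K T i j).map
        (((eqAT K T).toLinearEquiv : AT K T ≃ₗ[K] B K T) : AT K T →ₗ[K] B K T)
      = LinearMap.range ((LinearMap.mulLeft K (bE K (i, qX 0))).comp
          (LinearMap.mulRight K (bE K ((j, qX 0) : Bas T)))) := by
    ext g
    simp only [Submodule.mem_map, peirceSubspace, LinearMap.mem_range, LinearMap.comp_apply,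
      LinearMap.mulLeft_apply, LinearMap.mulRight_apply]
    constructor
    · rintro ⟨z, ⟨a, rfl⟩, rfl⟩
      refine ⟨eqAT K T a, ?_⟩
      show bE K (i, qX 0) * (eqAT K T a * bE K ((j, qX 0) : Bas T)) = eqAT K T _
      rw [map_mul, map_mul, eqAT_apply K T (eA K T i), eqAT_apply K T (eA K T j), φAT_eA, φAT_eA]
    · rintro ⟨g', rfl⟩
      obtain ⟨z, rfl⟩ := φAT_surj K T g'
      refine ⟨eA K T i * (z * eA K T j), ⟨z, rfl⟩, ?_⟩
      show eqAT K T _ = bE K (i, qX 0) * (φAT K T z * bE K ((j, qX 0) : Bas T))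
      rw [map_mul, map_mul, eqAT_apply K T (eA K T i), eqAT_apply K T (eA K T j), φAT_eA, φAT_eA,
        eqAT_apply K T]
  have h1 : Module.finrank K (peirceSubspace K T i j)
      = Fintype.card {b : Bas T // b.1 = i ∧ tgt b = j} := by
    rw [← LinearEquiv.finrank_map_eq ((eqAT K T).toLinearEquiv) (peirceSubspace K T i j), hmap,
      finrank_rangeMB]
  rw [h1]
  have e1 : {b : Bas T // b.1 = i ∧ tgt b = j}
      ≃ {u : Q T // i + ((deg u : ℕ) : Fin 4) = j} :=
    { toFun := fun s => ⟨s.1.2, by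
        have h1 := s.2.1
        have h2 := s.2.2
        rw [tgt, h1] at h2
        exact h2⟩
      invFun := fun u => ⟨(i, u.1), ⟨rfl, u.2⟩⟩
      left_inv := fun s => Subtype.ext (Prod.ext s.2.1.symm rfl)
      right_inv := fun u => rfl }
  rw [Fintype.card_congr e1]
  rw [Fintype.card_congr (Equiv.subtypeSum), Fintype.card_sum,
    Fintype.card_congr (Equiv.subtypeSum), Fintype.card_sum]
  set dv : ℕ := ((j - i : Fin 4) : ℕ) with hdv
  have eX : ∀ k : Fin (4*T+2),
      (i + ((deg (Sum.inl k : Q T) : ℕ) : Fin 4) = j) ↔ ((k : ℕ) % 4 = dv) := fun k => by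
    rw [show (deg (Sum.inl k : Q T) : ℕ) = (k : ℕ) from rfl, fin4_cond]
  have eY : ∀ k : Fin (4*T+1),
      (i + ((deg (Sum.inr (Sum.inl k) : Q T) : ℕ) : Fin 4) = j)
        ↔ ((k : ℕ) % 4 = (dv+3) % 4) := fun k => by
    rw [show (deg (Sum.inr (Sum.inl k) : Q T) : ℕ) = (k : ℕ) + 1 from rfl, fin4_cond]
    omega
  have eS : ∀ c : Unit,
      (i + ((deg (Sum.inr (Sum.inr c) : Q T) : ℕ) : Fin 4) = j) ↔ (dv = 2) := fun c => by
    rw [show (deg (Sum.inr (Sum.inr c) : Q T) : ℕ) = 4*T+2 from rfl, fin4_cond]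
    omega
  have hX : Fintype.card {k : Fin (4*T+2) // i + ((deg (Sum.inl k : Q T) : ℕ) : Fin 4) = j}
      = (4*T+2 + 3 - dv)/4 := by
    rw [Fintype.card_congr (Equiv.subtypeEquivRight eX)]
    exact card_fin_mod (4*T+2) dv (by omega)
  have hY : Fintype.card
        {k : Fin (4*T+1) // i + ((deg (Sum.inr (Sum.inl k) : Q T) : ℕ) : Fin 4) = j}
      = (4*T+1 + 3 - ((dv+3) % 4))/4 := by
    rw [Fintype.card_congr (Equiv.subtypeEquivRight eY)]
    exact card_fin_mod (4*T+1) ((dv+3) % 4) (by omega)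
  have hS : Fintype.card
        {c : Unit // i + ((deg (Sum.inr (Sum.inr c) : Q T) : ℕ) : Fin 4) = j}
      = if dv = 2 then 1 else 0 := by
    rw [Fintype.card_congr (Equiv.subtypeEquivRight eS), card_unit_subtype]
  rw [hX, hY, hS]
  have hdvlt : dv < 4 := by
    rw [hdv]
    exact (j - i).isLt
  have hd0 : (j - i = (0 : Fin 4)) ↔ dv = 0 := by rw [hdv, Fin.ext_iff]; rfl
  have hd1 : (j - i = (1 : Fin 4)) ↔ dv = 1 := by rw [hdv, Fin.ext_iff]; rfl
  have hd2 : (j - i = (2 : Fin 4)) ↔ dv = 2 := by rw [hdv, Fin.ext_iff]; rfl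
  rcases show dv = 0 ∨ dv = 1 ∨ dv = 2 ∨ dv = 3 by omega with h | h | h | h
  · rw [if_pos (hd0.mpr h), h]
    norm_num
    omega
  · rw [if_neg (fun hh => absurd (hd0.mp hh) (by omega)), if_pos (hd1.mpr h), h]
    norm_num
    omega
  · rw [if_neg (fun hh => absurd (hd0.mp hh) (by omega)),
      if_neg (fun hh => absurd (hd1.mp hh) (by omega)), if_pos (hd2.mpr h), h]
    norm_num
    omega
  · rw [if_neg (fun hh => absurd (hd0.mp hh) (by omega)),
      if_neg (fun hh => absurd (hd1.mp hh) (by omega)),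
      if_neg (fun hh => absurd (hd2.mp hh) (by omega)), h]
    norm_num
    omega
end
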